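/- arXiv:1403.4696 — 8 statements merged into one kernel-verified Lean document; each statement's English description precedes it below -/
import Mathlib

section
/- Monotonicity of the extreme floor levels: under Assumption 1, for every initial vector x(0) ∈ ℝ^n and every k ≥ 0, M(k+1) ≤ M(k) and m(k+1) ≥ m(k); consequently m(0) ≤ ⌊x_i(k)⌋ ≤ M(0) for every agent i and every k. -/
open Finset Filter

/-- Assumption 1 on the weight matrix `W` relative to the graph `G`:
symmetric, nonnegative, rows sum to 1, diagonally dominant (`w_ii > 1/2`),
respects the communication graph, and rational weights in `(0,1)` on edges. -/
def Assumption1 {n : ℕ} (G : SimpleGraph (Fin n)) (W : Matrix (Fin n) (Fin n) ℝ) : Prop :=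
  (∀ i j, W i j = W j i) ∧
  (∀ i j, 0 ≤ W i j) ∧
  (∀ i, ∑ j, W i j = 1) ∧
  (∀ i, 1 / 2 < W i i) ∧
  (∀ i j, i ≠ j → ¬G.Adj i j → W i j = 0) ∧
  (∀ i j, G.Adj i j → (∃ q : ℚ, (q : ℝ) = W i j) ∧ 0 < W i j ∧ W i j < 1)

/-- The quantized system `x(k+1) = W ⌊x(k)⌋ + x(k) − ⌊x(k)⌋`, componentwise. -/
def Traj {n : ℕ} (W : Matrix (Fin n) (Fin n) ℝ) (x : ℕ → Fin n → ℝ) : Prop :=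
  ∀ k i, x (k + 1) i = (∑ j, W i j * (⌊x k j⌋ : ℝ)) + x k i - (⌊x k i⌋ : ℝ)

/-- `m(k) = min_i ⌊x_i(k)⌋`. -/
noncomputable def mfun {n : ℕ} (hn : 0 < n) (x : ℕ → Fin n → ℝ) (k : ℕ) : ℤ :=
  Finset.univ.inf' ⟨⟨0, hn⟩, Finset.mem_univ _⟩ fun i => ⌊x k i⌋

/-- `M(k) = max_i ⌊x_i(k)⌋`. -/
noncomputable def Mfun {n : ℕ} (hn : 0 < n) (x : ℕ → Fin n → ℝ) (k : ℕ) : ℤ :=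
  Finset.univ.sup' ⟨⟨0, hn⟩, Finset.mem_univ _⟩ fun i => ⌊x k i⌋

/-- The γ gap conditions (fractional part `c_i(k) = x_i(k) − ⌊x_i(k)⌋`). -/
def GammaSetup {n : ℕ} (W : Matrix (Fin n) (Fin n) ℝ) (x : ℕ → Fin n → ℝ) (γ : ℝ) : Prop :=
  0 < γ ∧
  ∀ i k,
    (x k i - (⌊x k i⌋ : ℝ) > 1 - W i i → x k i - (⌊x k i⌋ : ℝ) - (1 - W i i) ≥ 2 * γ) ∧
    (1 - (x k i - (⌊x k i⌋ : ℝ)) > 1 - W i i →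
      1 - (x k i - (⌊x k i⌋ : ℝ)) - (1 - W i i) ≥ 2 * γ) ∧
    1 - (x k i - (⌊x k i⌋ : ℝ)) ≥ 2 * γ ∧
    1 / 2 - (1 - W i i) ≥ 2 * γ

/-- `α_i = 1 − w_ii + γ`. -/
noncomputable def alpha {n : ℕ} (W : Matrix (Fin n) (Fin n) ℝ) (γ : ℝ) (i : Fin n) : ℝ :=
  1 - W i i + γ

/-- The Lyapunov function `V(k) = Σ_i max{|x_i(k) − m(k) − 1| − α_i, 0}`. -/
noncomputable def Vfun {n : ℕ} (hn : 0 < n) (W : Matrix (Fin n) (Fin n) ℝ) (γ : ℝ)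
    (x : ℕ → Fin n → ℝ) (k : ℕ) : ℝ :=
  ∑ i, max (|x k i - (mfun hn x k : ℝ) - 1| - alpha W γ i) 0

/-- `δ = min_{(p,q) ∈ E} w_pq`. -/
noncomputable def deltaMin {n : ℕ} (G : SimpleGraph (Fin n)) (W : Matrix (Fin n) (Fin n) ℝ) : ℝ :=
  sInf {r : ℝ | ∃ p q, G.Adj p q ∧ r = W p q}

open Classical in
/-- `T_s(k0,k)`: number of times `t ∈ [k0,k]` at which node `s` lies in `X1 ∪ X2`,
i.e. `x_s(t) < m(t) + 1`. -/
noncomputable def Tcount {n : ℕ} (hn : 0 < n) (x : ℕ → Fin n → ℝ) (s : Fin n)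
    (k0 k : ℕ) : ℕ :=
  ((Finset.Icc k0 k).filter fun t => x t s < (mfun hn x t : ℝ) + 1).card

/-- Monotonicity of the extreme floor levels: `M(k)` is non-increasing and
`m(k)` is non-decreasing; consequently `m(0) ≤ ⌊x_i(k)⌋ ≤ M(0)`. -/
theorem extreme_floor_monotonicity {n : ℕ} (hn : 1 < n)
    (G : SimpleGraph (Fin n)) (hG : G.Connected)
    (W : Matrix (Fin n) (Fin n) ℝ) (hW : Assumption1 G W)
    (x : ℕ → Fin n → ℝ) (hx : Traj W x) :
    (∀ k, Mfun (Nat.zero_lt_one.trans hn) x (k + 1) ≤ Mfun (Nat.zero_lt_one.trans hn) x k ∧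
      mfun (Nat.zero_lt_one.trans hn) x k ≤ mfun (Nat.zero_lt_one.trans hn) x (k + 1)) ∧
    (∀ k i, mfun (Nat.zero_lt_one.trans hn) x 0 ≤ ⌊x k i⌋ ∧
      ⌊x k i⌋ ≤ Mfun (Nat.zero_lt_one.trans hn) x 0) := by
  set h0 : 0 < n := Nat.zero_lt_one.trans hn
  obtain ⟨hsym, hnn, hrow, hdiag, hzero, hedge⟩ := hW
  have key : ∀ k i, mfun h0 x k ≤ ⌊x (k + 1) i⌋ ∧ ⌊x (k + 1) i⌋ ≤ Mfun h0 x k := by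
    intro k i
    have hm : ∀ j, (mfun h0 x k : ℝ) ≤ (⌊x k j⌋ : ℝ) := by
      intro j
      exact_mod_cast Finset.inf'_le _ (Finset.mem_univ j)
    have hM : ∀ j, (⌊x k j⌋ : ℝ) ≤ (Mfun h0 x k : ℝ) := by
      intro j
      exact_mod_cast Finset.le_sup' (f := fun i => ⌊x k i⌋) (Finset.mem_univ j)
    have hsum_lo : (mfun h0 x k : ℝ) ≤ ∑ j, W i j * (⌊x k j⌋ : ℝ) := by
      calc (mfun h0 x k : ℝ) = ∑ j, W i j * (mfun h0 x k : ℝ) := by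
            rw [← Finset.sum_mul, hrow i, one_mul]
        _ ≤ ∑ j, W i j * (⌊x k j⌋ : ℝ) :=
            Finset.sum_le_sum fun j _ => mul_le_mul_of_nonneg_left (hm j) (hnn i j)
    have hsum_hi : ∑ j, W i j * (⌊x k j⌋ : ℝ) ≤ (Mfun h0 x k : ℝ) := by
      calc ∑ j, W i j * (⌊x k j⌋ : ℝ) ≤ ∑ j, W i j * (Mfun h0 x k : ℝ) :=
            Finset.sum_le_sum fun j _ => mul_le_mul_of_nonneg_left (hM j) (hnn i j)
        _ = (Mfun h0 x k : ℝ) := by rw [← Finset.sum_mul, hrow i, one_mul]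
    have hfrac0 : (0:ℝ) ≤ x k i - (⌊x k i⌋ : ℝ) := sub_nonneg.2 (Int.floor_le _)
    have hfrac1 : x k i - (⌊x k i⌋ : ℝ) < 1 := by
      have := Int.lt_floor_add_one (x k i); linarith
    rw [hx k i]
    constructor
    · rw [Int.le_floor]; push_cast; linarith
    · have : ⌊(∑ j, W i j * (⌊x k j⌋ : ℝ)) + x k i - (⌊x k i⌋ : ℝ)⌋ < Mfun h0 x k + 1 := by
        rw [Int.floor_lt]; push_cast; linarith
      omega
  have mono : ∀ k, Mfun h0 x (k + 1) ≤ Mfun h0 x k ∧ mfun h0 x k ≤ mfun h0 x (k + 1) := by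
    intro k
    constructor
    · exact Finset.sup'_le _ _ fun i _ => (key k i).2
    · exact Finset.le_inf' _ _ fun i _ => (key k i).1
  refine ⟨mono, ?_⟩
  have hMk : ∀ k, Mfun h0 x k ≤ Mfun h0 x 0 := by
    intro k; induction k with
    | zero => exact le_refl _
    | succ m ih => exact le_trans (mono m).1 ih
  have hmk : ∀ k, mfun h0 x 0 ≤ mfun h0 x k := by
    intro k; induction k with
    | zero => exact le_refl _
    | succ m ih => exact le_trans ih (mono m).2
  intro k i
  have a1 : mfun h0 x k ≤ ⌊x k i⌋ := Finset.inf'_le _ (Finset.mem_univ i)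
  have a2 : ⌊x k i⌋ ≤ Mfun h0 x k := Finset.le_sup' (f := fun j => ⌊x k j⌋) (Finset.mem_univ i)
  exact ⟨le_trans (hmk k) a1, le_trans a2 (hMk k)⟩
end

section
/- Proposition 1 (the quantized system is cyclic): under Assumption 1, for every initial vector x(0) ∈ ℝ^n there exist a positive integer P and a finite time k0 such that x(k+P) = x(k) for all k ≥ k0. -/
open Finset Filter

/-- Proposition 1: under Assumption 1 the quantized system is cyclic. -/
theorem quantized_system_cyclic {n : ℕ} (hn : 1 < n)
    (G : SimpleGraph (Fin n)) (hG : G.Connected)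
    (W : Matrix (Fin n) (Fin n) ℝ) (hW : Assumption1 G W)
    (x : ℕ → Fin n → ℝ) (hx : Traj W x) :
    ∃ P : ℕ, 0 < P ∧ ∃ k0 : ℕ, ∀ k, k0 ≤ k → x (k + P) = x k := by

  classical
  have hn0 : 0 < n := lt_trans one_pos hn
  obtain ⟨hsym, hnonneg, hrow, hdiag, hzero, hedge⟩ := hW
  -- all entries of W are rational
  have h1 : ∀ i j : Fin n, ∃ q : ℚ, i ≠ j → (q : ℝ) = W i j := by
    intro i j
    by_cases hij : i = j
    · exact ⟨0, fun h => absurd hij h⟩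
    · by_cases h : G.Adj i j
      · obtain ⟨q, hq⟩ := (hedge i j h).1
        exact ⟨q, fun _ => hq⟩
      · exact ⟨0, fun _ => by simp [hzero i j hij h]⟩
  choose q0 hq0 using h1
  set q : Fin n → Fin n → ℚ :=
    fun i j => if i = j then 1 - ∑ k ∈ Finset.univ.erase i, q0 i k else q0 i j with hqdef
  have hq : ∀ i j, (q i j : ℝ) = W i j := by
    intro i j
    by_cases hij : i = j
    · subst hij
      have hsum : ∑ k ∈ Finset.univ.erase i, W i k = 1 - W i i := by
        have h := hrow i
        rw [← Finset.add_sum_erase _ _ (Finset.mem_univ i)] at h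
        linarith
      simp only [hqdef, if_pos rfl]
      push_cast
      rw [Finset.sum_congr rfl
        (fun k hk => hq0 i k (Ne.symm (Finset.ne_of_mem_erase hk))), hsum]
      ring
    · simp only [hqdef, if_neg hij]
      exact hq0 i j hij
  -- common denominator
  set D : ℕ := ∏ i, ∏ j, (q i j).den with hDdef
  have hDpos : 0 < D := Finset.prod_pos fun i _ => Finset.prod_pos fun j _ => (q i j).pos
  have hDne : (D : ℝ) ≠ 0 := Nat.cast_ne_zero.2 hDpos.ne'
  have hden : ∀ i j, (q i j).den ∣ D := by
    intro i j
    have ha : (q i j).den ∣ ∏ j', (q i j').den :=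
      Finset.dvd_prod_of_mem (fun j' => (q i j').den) (Finset.mem_univ j)
    have hb : (∏ j', (q i j').den) ∣ D := by
      rw [hDdef]
      exact Finset.dvd_prod_of_mem (fun i' => ∏ j', (q i' j').den) (Finset.mem_univ i)
    exact ha.trans hb
  have hzex : ∀ i j, ∃ zz : ℤ, (zz : ℝ) = (D : ℝ) * W i j := by
    intro i j
    obtain ⟨m, hm⟩ := hden i j
    refine ⟨(q i j).num * m, ?_⟩
    have hQ : ((q i j) * (D : ℚ)) = (((q i j).num * m : ℤ) : ℚ) := by
      rw [hm]
      push_cast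
      rw [← mul_assoc, Rat.mul_den_eq_num]
    have := congrArg (fun r : ℚ => (r : ℝ)) hQ
    push_cast at this ⊢
    rw [← this, hq]
    ring
  choose z hzc using hzex
  -- floor bounds
  set A : ℤ := mfun hn0 x 0 with hAdef
  set B : ℤ := Mfun hn0 x 0 with hBdef
  have hA_le : ∀ i, A ≤ ⌊x 0 i⌋ := by
    intro i
    rw [hAdef]
    unfold mfun
    exact Finset.inf'_le _ (Finset.mem_univ i)
  have hB_ge : ∀ i, ⌊x 0 i⌋ ≤ B := by
    intro i
    rw [hBdef]
    unfold Mfun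
    exact Finset.le_sup' (fun i => ⌊x 0 i⌋) (Finset.mem_univ i)
  have hbound : ∀ k i, A ≤ ⌊x k i⌋ ∧ ⌊x k i⌋ ≤ B := by
    intro k
    induction k with
    | zero =>
      intro i
      exact ⟨hA_le i, hB_ge i⟩
    | succ k ih =>
      intro i
      have hxk := hx k i
      have hlow : (A : ℝ) ≤ ∑ j, W i j * (⌊x k j⌋ : ℝ) := by
        calc (A : ℝ) = ∑ j, W i j * (A : ℝ) := by
              rw [← Finset.sum_mul, hrow i, one_mul]
          _ ≤ ∑ j, W i j * (⌊x k j⌋ : ℝ) := by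
              refine Finset.sum_le_sum fun j _ => ?_
              exact mul_le_mul_of_nonneg_left (by exact_mod_cast (ih j).1) (hnonneg i j)
      have hhigh : ∑ j, W i j * (⌊x k j⌋ : ℝ) ≤ (B : ℝ) := by
        calc ∑ j, W i j * (⌊x k j⌋ : ℝ) ≤ ∑ j, W i j * (B : ℝ) := by
              refine Finset.sum_le_sum fun j _ => ?_
              exact mul_le_mul_of_nonneg_left (by exact_mod_cast (ih j).2) (hnonneg i j)
          _ = (B : ℝ) := by rw [← Finset.sum_mul, hrow i, one_mul]
      have hfrac0 : (0 : ℝ) ≤ x k i - (⌊x k i⌋ : ℝ) := sub_nonneg.2 (Int.floor_le _)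
      have hfrac1 : x k i - (⌊x k i⌋ : ℝ) < 1 := by
        have := Int.lt_floor_add_one (x k i)
        linarith
      constructor
      · refine Int.le_floor.2 ?_
        rw [hxk]
        push_cast
        linarith
      · have hlt : x (k + 1) i < (B : ℝ) + 1 := by rw [hxk]; linarith
        have : ⌊x (k + 1) i⌋ < B + 1 := Int.floor_lt.2 (by exact_mod_cast hlt)
        omega
  have hxr : ∀ k i, (A : ℝ) ≤ x k i ∧ x k i < (B : ℝ) + 1 := by
    intro k i
    obtain ⟨h1', h2'⟩ := hbound k i
    constructor
    · exact le_trans (by exact_mod_cast h1') (Int.floor_le _)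
    · have := Int.lt_floor_add_one (x k i)
      have h2r : (⌊x k i⌋ : ℝ) ≤ (B : ℝ) := by exact_mod_cast h2'
      linarith
  -- lattice structure
  have hlat : ∀ k i, ∃ w : ℤ, (w : ℝ) = (D : ℝ) * (x k i - x 0 i) := by
    intro k
    induction k with
    | zero => intro i; exact ⟨0, by simp⟩
    | succ k ih =>
      intro i
      obtain ⟨w, hw⟩ := ih i
      refine ⟨(∑ j, z i j * ⌊x k j⌋) - (D : ℤ) * ⌊x k i⌋ + w, ?_⟩
      have hxk := hx k i
      push_cast
      rw [hw]
      have hterm : ∀ j ∈ Finset.univ, ((z i j : ℝ)) * (⌊x k j⌋ : ℝ)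
          = (D : ℝ) * (W i j * (⌊x k j⌋ : ℝ)) := by
        intro j _
        rw [hzc]
        ring
      rw [Finset.sum_congr rfl hterm, ← Finset.mul_sum, hxk]
      ring
  set C : ℤ := (D : ℤ) * (B + 1 - A) with hCdef
  have hmem : ∀ k, ∀ i, ∃ w : ℤ, |w| ≤ C ∧ x k i = x 0 i + (w : ℝ) / (D : ℝ) := by
    intro k i
    obtain ⟨w, hw⟩ := hlat k i
    refine ⟨w, ?_, ?_⟩
    · have habs : |(w : ℝ)| ≤ (C : ℝ) := by
        rw [hw, abs_mul, abs_of_nonneg (by positivity : (0:ℝ) ≤ (D:ℝ))]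
        have h1' := hxr k i
        have h2' := hxr 0 i
        have : |x k i - x 0 i| ≤ (B : ℝ) + 1 - (A : ℝ) := by
          rw [abs_le]
          constructor <;> [linarith [h1'.1, h2'.2]; linarith [h1'.2, h2'.1]]
        calc (D : ℝ) * |x k i - x 0 i| ≤ (D : ℝ) * ((B : ℝ) + 1 - (A : ℝ)) :=
              mul_le_mul_of_nonneg_left this (by positivity)
          _ = (C : ℝ) := by push_cast [hCdef]; ring
      have : |(w : ℝ)| = ((|w| : ℤ) : ℝ) := by push_cast; ring
      rw [this] at habs
      exact_mod_cast habs
    · field_simp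
      linarith [hw]
  -- finite state space
  set S : Set (Fin n → ℝ) :=
    {v | ∀ i, ∃ w : ℤ, |w| ≤ C ∧ v i = x 0 i + (w : ℝ) / (D : ℝ)} with hSdef
  have hSfin : S.Finite := by
    have hpi : (Set.pi Set.univ fun _ : Fin n => Set.Icc (-C) C).Finite :=
      Set.Finite.pi fun _ => Set.finite_Icc _ _
    refine (hpi.image fun w : Fin n → ℤ => fun i => x 0 i + (w i : ℝ) / (D : ℝ)).subset ?_
    rintro v hv
    choose w hw1 hw2 using hv
    refine ⟨w, fun i _ => Set.mem_Icc.2 (abs_le.1 (hw1 i)), ?_⟩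
    funext i
    exact (hw2 i).symm
  have hmap : Set.MapsTo x Set.univ S := fun k _ => hmem k
  obtain ⟨k1, -, k2, -, hne, heq⟩ :=
    Set.infinite_univ.exists_ne_map_eq_of_mapsTo hmap hSfin
  have hstep : ∀ a b : ℕ, x a = x b → x (a + 1) = x (b + 1) := by
    intro a b h
    funext i
    rw [hx a i, hx b i, h]
  have key : ∀ a b : ℕ, a < b → x a = x b →
      ∃ P : ℕ, 0 < P ∧ ∃ k0 : ℕ, ∀ k, k0 ≤ k → x (k + P) = x k := by
    intro a b hab hxab
    refine ⟨b - a, Nat.sub_pos_of_lt hab, a, ?_⟩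
    intro k hk
    induction k, hk using Nat.le_induction with
    | base =>
      rw [Nat.add_sub_cancel' hab.le]
      exact hxab.symm
    | succ k hk ih =>
      have hrw : k + 1 + (b - a) = (k + (b - a)) + 1 := by ring
      rw [hrw]
      exact hstep _ _ ih
  rcases hne.lt_or_gt with h | h
  · exact key k1 k2 h heq
  · exact key k2 k1 h heq.symm
end

section
/- Existence of the gap constant γ: under Assumption 1, for every initial vector x(0) ∈ ℝ^n there exists a real constant γ > 0 such that for every agent i and every time k ≥ 0 the following hold: (i) if c_i(k) > 1 − w_ii then c_i(k) − (1 − w_ii) ≥ 2γ; (ii) if 1 − c_i(k) > 1 − w_ii then (1 − c_i(k)) − (1 − w_ii) ≥ 2γ; (iii) 1 − c_i(k) ≥ 2γ; and (iv) 1/2 − (1 − w_ii) ≥ 2γ. -/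
open Finset Filter

/-- Auxiliary gap function: the minimum of the four relevant positive quantities. -/
noncomputable def gGap {n : ℕ} (W : Matrix (Fin n) (Fin n) ℝ) (i : Fin n) (c : ℝ) : ℝ :=
  min (min (if 1 - W i i < c then c - (1 - W i i) else 1)
           (if 1 - W i i < 1 - c then 1 - c - (1 - W i i) else 1))
      (min (1 - c) (W i i - 1 / 2))

lemma gGap_pos {n : ℕ} (W : Matrix (Fin n) (Fin n) ℝ) (i : Fin n) (c : ℝ)
    (hc0 : 0 ≤ c) (hc1 : c < 1) (hw : 1 / 2 < W i i) : 0 < gGap W i c := by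
  unfold gGap
  refine lt_min (lt_min ?_ ?_) (lt_min (by linarith) (by linarith)) <;>
    split <;> first | linarith | exact one_pos

/-- Existence of the gap constant `γ > 0` satisfying the four gap conditions. -/
theorem exists_gap_constant {n : ℕ} (hn : 1 < n)
    (G : SimpleGraph (Fin n)) (hG : G.Connected)
    (W : Matrix (Fin n) (Fin n) ℝ) (hW : Assumption1 G W)
    (x : ℕ → Fin n → ℝ) (hx : Traj W x) :
    ∃ γ : ℝ, GammaSetup W x γ := by
  classical
  obtain ⟨hsymm, hnonneg, hrow, hdiag, hzero, hedge⟩ := hW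
  -- rational representatives of off-diagonal entries
  have hex : ∀ i j : Fin n, ∃ r : ℚ, (r : ℝ) = if i = j then 0 else W i j := by
    intro i j
    by_cases h : i = j
    · exact ⟨0, by simp [h]⟩
    · by_cases hadj : G.Adj i j
      · obtain ⟨⟨q, hq⟩, -, -⟩ := hedge i j hadj
        exact ⟨q, by simp [h, hq]⟩
      · exact ⟨0, by simp [h, hzero i j h hadj]⟩
  choose Q hQ using hex
  set D : ℕ := ∏ i, ∏ j, (Q i j).den with hDdef
  have hD0 : 0 < D := Finset.prod_pos fun i _ => Finset.prod_pos fun j _ => (Q i j).pos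
  have hDR : (0 : ℝ) < (D : ℝ) := by exact_mod_cast hD0
  have hdvd : ∀ i j, (Q i j).den ∣ D := by
    intro i j
    rw [hDdef]
    exact dvd_trans (Finset.dvd_prod_of_mem (fun j' => (Q i j').den) (Finset.mem_univ j))
      (Finset.dvd_prod_of_mem (fun i' => ∏ j', (Q i' j').den) (Finset.mem_univ i))
  -- key rationality : weighted sums of integer differences lie in (1/D)ℤ
  have key : ∀ (i : Fin n) (c : Fin n → ℤ),
      ∃ m : ℤ, ∑ j, W i j * ((c j : ℝ) - (c i : ℝ)) = (m : ℝ) / D := by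
    intro i c
    have h1 : ∀ j, W i j * ((c j : ℝ) - (c i : ℝ)) = (Q i j : ℝ) * ((c j : ℝ) - (c i : ℝ)) := by
      intro j
      by_cases h : i = j
      · subst h; simp
      · rw [hQ i j, if_neg h]
    have h2 : ∀ j : Fin n, ∃ m : ℤ, Q i j * ((c j : ℚ) - (c i : ℚ)) * (D : ℚ) = (m : ℚ) := by
      intro j
      obtain ⟨e, he⟩ := hdvd i j
      refine ⟨(Q i j).num * (e : ℤ) * ((c j : ℤ) - (c i : ℤ)), ?_⟩
      have h3 : (Q i j) * (D : ℚ) = ((Q i j).num : ℚ) * (e : ℚ) := by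
        rw [he]
        push_cast
        rw [← mul_assoc, Rat.mul_den_eq_num]
      push_cast
      rw [mul_comm (Q i j) ((c j : ℚ) - (c i : ℚ)), mul_assoc, h3]
      ring
    choose mm hmm using h2
    refine ⟨∑ j, mm j, ?_⟩
    have h4 : (∑ j, Q i j * ((c j : ℚ) - (c i : ℚ))) * (D : ℚ) = ((∑ j, mm j : ℤ) : ℚ) := by
      rw [Finset.sum_mul]
      push_cast
      exact Finset.sum_congr rfl fun j _ => hmm j
    have h5 : (∑ j, Q i j * ((c j : ℚ) - (c i : ℚ))) = ((∑ j, mm j : ℤ) : ℚ) / D := by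
      field_simp at h4 ⊢
      exact_mod_cast h4
    calc ∑ j, W i j * ((c j : ℝ) - (c i : ℝ))
        = ∑ j, (Q i j : ℝ) * ((c j : ℝ) - (c i : ℝ)) := Finset.sum_congr rfl fun j _ => h1 j
      _ = ((∑ j, Q i j * ((c j : ℚ) - (c i : ℚ)) : ℚ) : ℝ) := by push_cast; ring
      _ = ((∑ j, mm j : ℤ) : ℝ) / D := by rw [h5]; push_cast; ring
  -- every x k i lies in x 0 i + (1/D)ℤ
  have hfrac : ∀ k (i : Fin n), ∃ m : ℤ, x k i = x 0 i + (m : ℝ) / D := by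
    intro k
    induction k with
    | zero => exact fun i => ⟨0, by simp⟩
    | succ k ih =>
      intro i
      obtain ⟨m₁, hm₁⟩ := ih i
      obtain ⟨m₂, hm₂⟩ := key i (fun j => ⌊x k j⌋)
      refine ⟨m₁ + m₂, ?_⟩
      have hstep : x (k + 1) i = x k i + ∑ j, W i j * ((⌊x k j⌋ : ℝ) - (⌊x k i⌋ : ℝ)) := by
        rw [hx k i]
        have : ∑ j, W i j * ((⌊x k j⌋ : ℝ) - (⌊x k i⌋ : ℝ))
            = (∑ j, W i j * (⌊x k j⌋ : ℝ)) - (∑ j, W i j) * (⌊x k i⌋ : ℝ) := by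
          rw [Finset.sum_mul, ← Finset.sum_sub_distrib]
          exact Finset.sum_congr rfl fun j _ => by ring
        rw [this, hrow i]
        ring
      rw [hstep, hm₂, hm₁]
      push_cast
      ring
  -- the finite candidate set
  set F : Finset ℝ := ((Finset.univ : Finset (Fin n)) ×ˢ Finset.range D).image
      (fun p : Fin n × ℕ => gGap W p.1 (Int.fract (x 0 p.1 + (p.2 : ℝ) / D))) with hFdef
  have hi0 : (⟨0, by omega⟩ : Fin n) ∈ (Finset.univ : Finset (Fin n)) := Finset.mem_univ _
  have hFne : F.Nonempty := by
    refine ⟨gGap W ⟨0, by omega⟩ (Int.fract (x 0 ⟨0, by omega⟩ + ((0 : ℕ) : ℝ) / D)), ?_⟩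
    rw [hFdef]
    exact Finset.mem_image.2 ⟨(⟨0, by omega⟩, 0),
      Finset.mem_product.2 ⟨Finset.mem_univ _, Finset.mem_range.2 hD0⟩, rfl⟩
  have hFpos : ∀ r ∈ F, 0 < r := by
    intro r hr
    rw [hFdef] at hr
    obtain ⟨p, -, rfl⟩ := Finset.mem_image.1 hr
    exact gGap_pos W p.1 _ (Int.fract_nonneg _) (Int.fract_lt_one _) (hdiag p.1)
  refine ⟨F.min' hFne / 2, ?_, ?_⟩
  · have := hFpos _ (F.min'_mem hFne)
    linarith
  intro i k
  -- gGap W i (fract (x k i)) ∈ F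
  obtain ⟨m, hm⟩ := hfrac k i
  have hmem : gGap W i (Int.fract (x k i)) ∈ F := by
    have hr0 : (0 : ℤ) ≤ m % (D : ℤ) := Int.emod_nonneg m (by exact_mod_cast hD0.ne')
    have hrD : m % (D : ℤ) < (D : ℤ) := Int.emod_lt_of_pos m (by exact_mod_cast hD0)
    have hfr : Int.fract (x k i) = Int.fract (x 0 i + ((m % (D : ℤ)).toNat : ℝ) / D) := by
      have h6 : x k i = (x 0 i + ((m % (D : ℤ) : ℤ) : ℝ) / D) + ((m / (D : ℤ) : ℤ) : ℝ) := by
        rw [hm]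
        have : (m : ℝ) = (D : ℝ) * ((m / (D : ℤ) : ℤ) : ℝ) + ((m % (D : ℤ) : ℤ) : ℝ) := by
          exact_mod_cast (Int.mul_ediv_add_emod m (D : ℤ)).symm
        rw [this]
        field_simp
        ring
      have h7 : (((m % (D : ℤ)).toNat : ℕ) : ℝ) = ((m % (D : ℤ) : ℤ) : ℝ) := by
        exact_mod_cast Int.toNat_of_nonneg hr0
      rw [h6, Int.fract_add_intCast, h7]
    rw [hfr, hFdef]
    refine Finset.mem_image.2 ⟨(i, (m % (D : ℤ)).toNat),
      Finset.mem_product.2 ⟨Finset.mem_univ _, Finset.mem_range.2 ?_⟩, rfl⟩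
    omega
  have hle : F.min' hFne ≤ gGap W i (Int.fract (x k i)) := Finset.min'_le _ _ hmem
  have h2γ : 2 * (F.min' hFne / 2) = F.min' hFne := by ring
  have hc : Int.fract (x k i) = x k i - (⌊x k i⌋ : ℝ) := rfl
  rw [hc] at hle
  set c := x k i - (⌊x k i⌋ : ℝ) with hcdef
  have hgap1 : gGap W i c ≤ (if 1 - W i i < c then c - (1 - W i i) else 1) :=
    le_trans (min_le_left _ _) (min_le_left _ _)
  have hgap2 : gGap W i c ≤ (if 1 - W i i < 1 - c then 1 - c - (1 - W i i) else 1) :=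
    le_trans (min_le_left _ _) (min_le_right _ _)
  have hgap3 : gGap W i c ≤ 1 - c := le_trans (min_le_right _ _) (min_le_left _ _)
  have hgap4 : gGap W i c ≤ W i i - 1 / 2 := le_trans (min_le_right _ _) (min_le_right _ _)
  refine ⟨?_, ?_, ?_, ?_⟩
  · intro h
    rw [if_pos h] at hgap1
    rw [h2γ]; linarith
  · intro h
    rw [if_pos h] at hgap2
    rw [h2γ]; linarith
  · rw [h2γ]; linarith
  · rw [h2γ]; linarith
end

section
/- Lemma 1 (emptiness of X6 persists): under Assumption 1 and the γ/α setup, if X6(k0) = ∅ at some time k0 (i.e. x_i(k0) < m(k0) + 2 + α_i for every i), then X6(k) = ∅ for all k ≥ k0 (i.e. x_i(k) < m(k) + 2 + α_i for every i and every k ≥ k0). -/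
open Finset Filter

private lemma mfun_le {n : ℕ} (hn : 0 < n) (x : ℕ → Fin n → ℝ) (k : ℕ) (i : Fin n) :
    mfun hn x k ≤ ⌊x k i⌋ :=
  Finset.inf'_le _ (Finset.mem_univ i)

private lemma le_mfun {n : ℕ} (hn : 0 < n) (x : ℕ → Fin n → ℝ) (k : ℕ) (z : ℤ)
    (h : ∀ i, z ≤ ⌊x k i⌋) : z ≤ mfun hn x k :=
  Finset.le_inf' _ _ fun i _ => h i

/-- Lemma 1: if `X6(k0) = ∅` then `X6(k) = ∅` for all `k ≥ k0`. -/
theorem X6_empty_persists {n : ℕ} (hn : 1 < n)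
    (G : SimpleGraph (Fin n)) (hG : G.Connected)
    (W : Matrix (Fin n) (Fin n) ℝ) (hW : Assumption1 G W)
    (x : ℕ → Fin n → ℝ) (hx : Traj W x)
    (γ : ℝ) (hγ : GammaSetup W x γ)
    (k0 : ℕ)
    (h6 : ∀ i, x k0 i < (mfun (Nat.zero_lt_one.trans hn) x k0 : ℝ) + 2 + alpha W γ i) :
    ∀ k, k0 ≤ k →
      ∀ i, x k i < (mfun (Nat.zero_lt_one.trans hn) x k : ℝ) + 2 + alpha W γ i := by
  obtain ⟨hsym, hnn, hrow, hdiag, hzero, hedge⟩ := hW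
  obtain ⟨hγpos, hγc⟩ := hγ
  set hn0 : 0 < n := Nat.zero_lt_one.trans hn with hn0def
  -- m is monotone along the trajectory
  have hm_mono : ∀ k, mfun hn0 x k ≤ mfun hn0 x (k + 1) := by
    intro k
    apply le_mfun
    intro i
    rw [Int.le_floor, hx k i]
    have h2 : ∑ j, W i j * ((mfun hn0 x k : ℤ) : ℝ) ≤ ∑ j, W i j * (⌊x k j⌋ : ℝ) := by
      apply Finset.sum_le_sum
      intro j _
      exact mul_le_mul_of_nonneg_left (by exact_mod_cast mfun_le hn0 x k j) (hnn i j)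
    have h3 : ∑ j, W i j * ((mfun hn0 x k : ℤ) : ℝ) = ((mfun hn0 x k : ℤ) : ℝ) := by
      rw [← Finset.sum_mul, hrow i, one_mul]
    have h4 := Int.floor_le (x k i)
    linarith
  intro k hk
  induction k, hk using Nat.le_induction with
  | base => exact h6
  | succ k hk ih =>
    intro i
    have hm1 : ((mfun hn0 x k : ℤ) : ℝ) ≤ ((mfun hn0 x (k + 1) : ℤ) : ℝ) := by
      exact_mod_cast hm_mono k
    -- all floors at time k are ≤ m(k) + 2
    have hfloor : ∀ j, ⌊x k j⌋ ≤ mfun hn0 x k + 2 := by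
      intro j
      have hγ4 := (hγc j k).2.2.2
      have hαj : alpha W γ j < 1 := by unfold alpha; linarith
      have hxj := ih j
      have : x k j < ((mfun hn0 x k + 3 : ℤ) : ℝ) := by push_cast; linarith
      have := Int.floor_lt.mpr this
      omega
    have hfloorR : ∀ j, (⌊x k j⌋ : ℝ) ≤ ((mfun hn0 x k : ℤ) : ℝ) + 2 := by
      intro j
      have := hfloor j
      have : ((⌊x k j⌋ : ℤ) : ℝ) ≤ ((mfun hn0 x k + 2 : ℤ) : ℝ) := by exact_mod_cast this
      push_cast at this; linarith
    -- sum split bound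
    have hsum2 : ∑ j ∈ ({i} : Finset (Fin n))ᶜ, W i j = 1 - W i i := by
      have h := hrow i
      rw [Fintype.sum_eq_add_sum_compl i] at h
      linarith
    have hsplit : ∑ j, W i j * (⌊x k j⌋ : ℝ)
        ≤ W i i * (⌊x k i⌋ : ℝ) + (1 - W i i) * (((mfun hn0 x k : ℤ) : ℝ) + 2) := by
      rw [Fintype.sum_eq_add_sum_compl i]
      have h1 : ∑ j ∈ ({i} : Finset (Fin n))ᶜ, W i j * (⌊x k j⌋ : ℝ)
          ≤ ∑ j ∈ ({i} : Finset (Fin n))ᶜ, W i j * (((mfun hn0 x k : ℤ) : ℝ) + 2) :=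
        Finset.sum_le_sum fun j _ => mul_le_mul_of_nonneg_left (hfloorR j) (hnn i j)
      rw [← Finset.sum_mul, hsum2] at h1
      linarith
    have hxk1 := hx k i
    have hc0 := Int.floor_le (x k i)
    have hc1 := Int.lt_floor_add_one (x k i)
    have hdi := hdiag i
    have hxi := ih i
    have hαi : alpha W γ i = 1 - W i i + γ := rfl
    -- case analysis on ⌊x k i⌋
    rcases le_or_gt (⌊x k i⌋) (mfun hn0 x k + 1) with hcase | hcase
    · have hfr : (⌊x k i⌋ : ℝ) ≤ ((mfun hn0 x k : ℤ) : ℝ) + 1 := by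
        have : ((⌊x k i⌋ : ℤ) : ℝ) ≤ ((mfun hn0 x k + 1 : ℤ) : ℝ) := by exact_mod_cast hcase
        push_cast at this; linarith
      have hmul : W i i * (⌊x k i⌋ : ℝ) ≤ W i i * (((mfun hn0 x k : ℤ) : ℝ) + 1) :=
        mul_le_mul_of_nonneg_left hfr (hnn i i)
      rw [hxk1, hαi]
      linarith
    · have hfeq : ⌊x k i⌋ = mfun hn0 x k + 2 := le_antisymm (hfloor i) (by omega)
      have hfr : (⌊x k i⌋ : ℝ) = ((mfun hn0 x k : ℤ) : ℝ) + 2 := by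
        rw [hfeq]; push_cast; ring
      have hS : ∑ j, W i j * (⌊x k j⌋ : ℝ) ≤ ((mfun hn0 x k : ℤ) : ℝ) + 2 := by
        rw [hfr] at hsplit; linarith
      rw [hxk1, hαi]
      rw [hαi] at hxi
      linarith
end

section
/- Lemma 3 (Lyapunov function is non-increasing): under Assumption 1 and the γ/α setup, for any time k at which m(k+1) = m(k), the Lyapunov function V(k) = Σ_i max{|x_i(k) − m(k) − 1| − α_i, 0} satisfies V(k+1) − V(k) ≤ 0. -/
open Finset Filter

/-- Lemma 3: the Lyapunov function is non-increasing whenever `m(k+1) = m(k)`. -/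
theorem lyapunov_nonincreasing {n : ℕ} (hn : 1 < n)
    (G : SimpleGraph (Fin n)) (hG : G.Connected)
    (W : Matrix (Fin n) (Fin n) ℝ) (hW : Assumption1 G W)
    (x : ℕ → Fin n → ℝ) (hx : Traj W x)
    (γ : ℝ) (hγ : GammaSetup W x γ)
    (k : ℕ)
    (hm : mfun (Nat.zero_lt_one.trans hn) x (k + 1) = mfun (Nat.zero_lt_one.trans hn) x k) :
    Vfun (Nat.zero_lt_one.trans hn) W γ x (k + 1) -
      Vfun (Nat.zero_lt_one.trans hn) W γ x k ≤ 0 := by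
  classical
  obtain ⟨hsym, hnonneg, hrow, hdiag, hzero, hrat⟩ := hW
  obtain ⟨hγ0, hγc⟩ := hγ
  set hn0 : 0 < n := Nat.zero_lt_one.trans hn with hhn0
  set m : ℤ := mfun hn0 x k with hmdef
  have hm_le : ∀ i, m ≤ ⌊x k i⌋ := by
    intro i
    rw [hmdef]
    unfold mfun
    exact Finset.inf'_le _ (Finset.mem_univ i)
  set c : Fin n → ℝ := fun i => x k i - (⌊x k i⌋ : ℝ) with hcdef
  set d : Fin n → ℤ := fun i => ⌊x k i⌋ - m with hddef
  set S : Fin n → ℝ := fun i => ∑ j, W i j * ((d j : ℤ) : ℝ) with hSdef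
  set y : Fin n → ℝ := fun i => x k i - (m : ℝ) - 1 with hydef
  set Y : Fin n → ℝ := fun i => x (k+1) i - (m : ℝ) - 1 with hYdef
  have hc0 : ∀ i, 0 ≤ c i := fun i => sub_nonneg.2 (Int.floor_le _)
  have hc1 : ∀ i, c i < 1 := by
    intro i
    have := Int.lt_floor_add_one (x k i)
    simp only [hcdef]
    linarith
  have hd0 : ∀ i, 0 ≤ d i := fun i => sub_nonneg.2 (hm_le i)
  have hdR : ∀ i, (0:ℝ) ≤ ((d i : ℤ) : ℝ) := fun i => by exact_mod_cast hd0 i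
  have hy_eq : ∀ i, y i = ((d i : ℤ) : ℝ) - 1 + c i := by
    intro i
    simp only [hydef, hddef, hcdef]
    push_cast
    ring
  have hY_eq : ∀ i, Y i = S i + c i - 1 := by
    intro i
    have h := hx k i
    have hfl : ∀ j, ((⌊x k j⌋ : ℤ) : ℝ) = ((d j : ℤ) : ℝ) + (m : ℝ) := by
      intro j
      simp only [hddef]
      push_cast
      ring
    have hsum : (∑ j, W i j * ((⌊x k j⌋ : ℤ):ℝ)) = S i + (m:ℝ) := by
      have hpt : ∀ j, W i j * ((⌊x k j⌋:ℤ):ℝ)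
          = W i j * ((d j : ℤ) : ℝ) + W i j * (m:ℝ) := by
        intro j; rw [hfl j]; ring
      rw [Finset.sum_congr rfl fun j _ => hpt j, Finset.sum_add_distrib,
        ← Finset.sum_mul, hrow i, hSdef]
      ring
    simp only [hYdef]
    rw [h, hsum]
    simp only [hcdef, hSdef]
    ring
  have hα_le : ∀ i, 1 - W i i + γ ≤ 1/2 - γ := by
    intro i
    have h := (hγc i k).2.2.2
    linarith
  have hWle1 : ∀ i, W i i ≤ 1 := by
    intro i
    have h := Finset.single_le_sum (f := fun j => W i j)
      (fun j _ => hnonneg i j) (Finset.mem_univ i)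
    rw [hrow i] at h
    exact h
  have hαval : ∀ i, alpha W γ i = 1 - W i i + γ := fun i => rfl
  have hαpos : ∀ i, 0 < alpha W γ i := by
    intro i
    have := hWle1 i
    rw [hαval i]
    linarith
  have hS_lb : ∀ i, W i i * ((d i : ℤ) : ℝ) ≤ S i := by
    intro i
    rw [hSdef]
    exact Finset.single_le_sum (f := fun j => W i j * ((d j : ℤ) : ℝ))
      (fun j _ => mul_nonneg (hnonneg i j) (hdR j)) (Finset.mem_univ i)
  have hYy : ∀ i, Y i - y i = S i - ((d i : ℤ) : ℝ) := by
    intro i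
    rw [hY_eq i, hy_eq i]
    ring
  have hI2 : ∀ i, Y i ≤ -(alpha W γ i) → d i = 0 := by
    intro i h
    by_contra hne
    have h0 := hd0 i
    have h1 : (1:ℤ) ≤ d i := by omega
    have h1R : (1:ℝ) ≤ ((d i : ℤ) : ℝ) := by exact_mod_cast h1
    have hw : 0 ≤ W i i := hnonneg i i
    have hmul : W i i * 1 ≤ W i i * ((d i : ℤ) : ℝ) :=
      mul_le_mul_of_nonneg_left h1R hw
    have hYi := hY_eq i
    have hSl := hS_lb i
    have hci := hc0 i
    rw [hαval i] at h
    linarith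
  set σ : Fin n → ℝ :=
    fun i => if alpha W γ i ≤ Y i then 1 else if Y i ≤ -(alpha W γ i) then -1 else 0
    with hσdef
  set b : Fin n → ℝ := fun i =>
    (if (¬ alpha W γ i ≤ Y i) ∧ (¬ Y i ≤ -(alpha W γ i)) ∧ 2 ≤ d i
      then ((d i : ℤ) : ℝ) - 1 else 0)
    + (if alpha W γ i ≤ Y i ∧ d i = 0 then 1 else 0) with hbdef
  have hb0 : ∀ i, 0 ≤ b i := by
    intro i
    simp only [hbdef]
    apply add_nonneg
    · split_ifs with h
      · have h2 : (2:ℝ) ≤ ((d i : ℤ) : ℝ) := by exact_mod_cast h.2.2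
        linarith
      · exact le_refl 0
    · split_ifs <;> norm_num
  -- per-node inequality
  have hstep : ∀ i, max (|Y i| - alpha W γ i) 0 - max (|y i| - alpha W γ i) 0
      ≤ σ i * (Y i - y i) - b i * (1 - W i i) := by
    intro i
    have hαp := hαpos i
    have hρy0 : (0:ℝ) ≤ max (|y i| - alpha W γ i) 0 := le_max_right _ _
    have hρyu : y i - alpha W γ i ≤ max (|y i| - alpha W γ i) 0 :=
      le_trans (by linarith [le_abs_self (y i)]) (le_max_left _ _)
    have hρyl : -(y i) - alpha W γ i ≤ max (|y i| - alpha W γ i) 0 :=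
      le_trans (by linarith [neg_abs_le (y i)]) (le_max_left _ _)
    by_cases h1 : alpha W γ i ≤ Y i
    · have hσi : σ i = 1 := by simp only [hσdef]; rw [if_pos h1]
      have hρY : max (|Y i| - alpha W γ i) 0 = Y i - alpha W γ i := by
        rw [abs_of_nonneg (by linarith), max_eq_left (by linarith)]
      by_cases hd0i : d i = 0
      · have hbi : b i = 1 := by simp only [hbdef]; simp [h1, hd0i]
        have hyv : y i = c i - 1 := by rw [hy_eq i, hd0i]; push_cast; ring
        rw [hσi, hbi, hρY]
        have hc1i := hc1 i
        linarith [hαval i, hγ0, hρy0]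
      · have hbi : b i = 0 := by simp only [hbdef]; simp [h1, hd0i]
        rw [hσi, hbi, hρY]
        linarith
    · by_cases h2 : Y i ≤ -(alpha W γ i)
      · have hσi : σ i = -1 := by simp only [hσdef]; rw [if_neg h1, if_pos h2]
        have hbi : b i = 0 := by simp only [hbdef]; simp [h1, h2]
        have hρY : max (|Y i| - alpha W γ i) 0 = -(Y i) - alpha W γ i := by
          rw [abs_of_nonpos (by linarith), max_eq_left (by linarith)]
        rw [hσi, hbi, hρY]
        linarith
      · have hσi : σ i = 0 := by simp only [hσdef]; rw [if_neg h1, if_neg h2]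
        have hρY : max (|Y i| - alpha W γ i) 0 = 0 := by
          apply max_eq_right
          have habs : |Y i| < alpha W γ i := abs_lt.2 ⟨by linarith, by linarith⟩
          linarith
        by_cases h2d : 2 ≤ d i
        · have hbi : b i = ((d i : ℤ) : ℝ) - 1 := by
            simp only [hbdef]; simp [h1, h2, h2d]
          have h2R : (2:ℝ) ≤ ((d i : ℤ) : ℝ) := by exact_mod_cast h2d
          rw [hσi, hbi, hρY]
          have hyi := hy_eq i
          have hαl := hα_le i
          have hw1 := hWle1 i
          have hc0i := hc0 i
          have hwnn : 0 ≤ W i i := hnonneg i i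
          nlinarith [hαval i, hρyu, hγ0,
            mul_nonneg (by linarith : (0:ℝ) ≤ ((d i : ℤ) : ℝ) - 2) hwnn]
        · have hbi : b i = 0 := by simp only [hbdef]; simp [h1, h2, h2d]
          rw [hσi, hbi, hρY]
          linarith
  -- pairwise inequality
  have hpair : ∀ i j, d i < d j →
      (σ i - σ j) * (((d j : ℤ) : ℝ) - ((d i : ℤ) : ℝ)) ≤ b i + b j := by
    intro i j hij
    have hDji : (1:ℝ) ≤ ((d j : ℤ) : ℝ) - ((d i : ℤ) : ℝ) := by
      have h' : d i + 1 ≤ d j := hij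
      have : ((d i : ℤ) : ℝ) + 1 ≤ ((d j : ℤ) : ℝ) := by exact_mod_cast h'
      linarith
    have hbin := hb0 i
    have hbjn := hb0 j
    have easy : σ i - σ j ≤ 0 →
        (σ i - σ j) * (((d j : ℤ) : ℝ) - ((d i : ℤ) : ℝ)) ≤ b i + b j := by
      intro h
      have h0 : (0:ℝ) ≤ ((d j : ℤ) : ℝ) - ((d i : ℤ) : ℝ) := by linarith
      nlinarith [mul_nonneg (neg_nonneg.2 h) h0]
    by_cases hj1 : alpha W γ j ≤ Y j
    · have hσj : σ j = 1 := by simp only [hσdef]; rw [if_pos hj1]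
      have hσile : σ i ≤ 1 := by
        simp only [hσdef]; split_ifs <;> norm_num
      exact easy (by rw [hσj]; linarith)
    · by_cases hj2 : Y j ≤ -(alpha W γ j)
      · exfalso
        have hdj0 := hI2 j hj2
        have := hd0 i
        omega
      · have hσj : σ j = 0 := by simp only [hσdef]; rw [if_neg hj1, if_neg hj2]
        by_cases hi1 : alpha W γ i ≤ Y i
        · have hσi : σ i = 1 := by simp only [hσdef]; rw [if_pos hi1]
          rw [hσi, hσj]
          by_cases h2d : 2 ≤ d j
          · have hbj : b j = ((d j : ℤ) : ℝ) - 1 := by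
              simp only [hbdef]; simp [hj1, hj2, h2d]
            by_cases hdi : d i = 0
            · have hbi : b i = 1 := by simp only [hbdef]; simp [hi1, hdi]
              have hDi : ((d i : ℤ) : ℝ) = 0 := by exact_mod_cast hdi
              rw [hbi, hbj, hDi]
              linarith
            · have hdi1 : (1:ℤ) ≤ d i := by have := hd0 i; omega
              have hdi1R : (1:ℝ) ≤ ((d i : ℤ) : ℝ) := by exact_mod_cast hdi1
              rw [hbj]
              linarith
          · have hdi : d i = 0 := by have := hd0 i; omega
            have hdj : d j = 1 := by have := hd0 i; omega
            have hbi : b i = 1 := by simp only [hbdef]; simp [hi1, hdi]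
            have hDi : ((d i : ℤ) : ℝ) = 0 := by exact_mod_cast hdi
            have hDj : ((d j : ℤ) : ℝ) = 1 := by exact_mod_cast hdj
            rw [hbi, hDi, hDj]
            linarith
        · by_cases hi2 : Y i ≤ -(alpha W γ i)
          · have hσi : σ i = -1 := by simp only [hσdef]; rw [if_neg hi1, if_pos hi2]
            exact easy (by rw [hσi, hσj]; norm_num)
          · have hσi : σ i = 0 := by simp only [hσdef]; rw [if_neg hi1, if_neg hi2]
            exact easy (by rw [hσi, hσj]; norm_num)
  have hpt : ∀ i j, (σ i - σ j) * (((d j : ℤ) : ℝ) - ((d i : ℤ) : ℝ))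
      ≤ (if i = j then 0 else b i + b j) := by
    intro i j
    rcases lt_trichotomy (d i) (d j) with h | h | h
    · have hij : i ≠ j := by
        intro he
        rw [he] at h
        exact lt_irrefl _ h
      rw [if_neg hij]
      exact hpair i j h
    · have hR : ((d i : ℤ) : ℝ) = ((d j : ℤ) : ℝ) := by exact_mod_cast h
      have h0 : (σ i - σ j) * (((d j : ℤ) : ℝ) - ((d i : ℤ) : ℝ)) = 0 := by
        rw [hR]; ring
      rw [h0]
      split_ifs with he
      · exact le_refl 0
      · exact add_nonneg (hb0 i) (hb0 j)
    · have hij : i ≠ j := by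
        intro he
        rw [he] at h
        exact lt_irrefl _ h
      rw [if_neg hij]
      have h' := hpair j i h
      have heq : (σ i - σ j) * (((d j : ℤ) : ℝ) - ((d i : ℤ) : ℝ))
          = (σ j - σ i) * (((d i : ℤ) : ℝ) - ((d j : ℤ) : ℝ)) := by ring
      rw [heq]
      linarith
  -- key summation bound
  have key : (∑ i, σ i * (S i - ((d i : ℤ) : ℝ))) ≤ ∑ i, b i * (1 - W i i) := by
    have hrowD : ∀ i, S i - ((d i : ℤ) : ℝ)
        = ∑ j, W i j * (((d j : ℤ) : ℝ) - ((d i : ℤ) : ℝ)) := by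
      intro i
      have hh : ∑ j, W i j * (((d j : ℤ) : ℝ) - ((d i : ℤ) : ℝ))
          = (∑ j, W i j * ((d j : ℤ) : ℝ)) - (∑ j, W i j) * ((d i : ℤ) : ℝ) := by
        rw [Finset.sum_mul, ← Finset.sum_sub_distrib]
        exact Finset.sum_congr rfl fun j _ => by ring
      rw [hh, hrow i]
      simp only [hSdef]
      ring
    set A := ∑ i, σ i * (S i - ((d i : ℤ) : ℝ)) with hA
    have h1 : A = ∑ i, ∑ j, W i j * (σ i * (((d j : ℤ) : ℝ) - ((d i : ℤ) : ℝ))) := by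
      rw [hA]
      refine Finset.sum_congr rfl fun i _ => ?_
      rw [hrowD i, Finset.mul_sum]
      exact Finset.sum_congr rfl fun j _ => by ring
    have h2 : A = ∑ i, ∑ j, W i j * (-(σ j) * (((d j : ℤ) : ℝ) - ((d i : ℤ) : ℝ))) := by
      rw [h1, Finset.sum_comm]
      refine Finset.sum_congr rfl fun i _ => Finset.sum_congr rfl fun j _ => ?_
      rw [hsym j i]
      ring
    have h3 : A + A = ∑ i, ∑ j, W i j * ((σ i - σ j) * (((d j : ℤ) : ℝ) - ((d i : ℤ) : ℝ))) := by
      nth_rewrite 1 [h1]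
      nth_rewrite 1 [h2]
      rw [← Finset.sum_add_distrib]
      refine Finset.sum_congr rfl fun i _ => ?_
      rw [← Finset.sum_add_distrib]
      exact Finset.sum_congr rfl fun j _ => by ring
    have h4 : A + A ≤ ∑ i, ∑ j, W i j * (if i = j then 0 else b i + b j) := by
      rw [h3]
      refine Finset.sum_le_sum fun i _ => Finset.sum_le_sum fun j _ => ?_
      exact mul_le_mul_of_nonneg_left (hpt i j) (hnonneg i j)
    have h5 : ∑ i, ∑ j, W i j * (if i = j then 0 else b i + b j)
        = (∑ i, b i * (1 - W i i)) + (∑ i, b i * (1 - W i i)) := by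
      have inner : ∀ i, ∑ j, W i j * (if i = j then 0 else b i + b j)
          = (b i * 1 + (∑ j, W i j * b j)) - (W i i * b i + W i i * b i) := by
        intro i
        have hptw : ∀ j, W i j * (if i = j then 0 else b i + b j)
            = (W i j * b i + W i j * b j) - (if i = j then W i i * b i + W i i * b i else 0) := by
          intro j
          split_ifs with h
          · subst h; ring
          · ring
        rw [Finset.sum_congr rfl fun j _ => hptw j, Finset.sum_sub_distrib,
          Finset.sum_add_distrib, Finset.sum_ite_eq]
        simp only [Finset.mem_univ, if_pos]
        rw [← Finset.sum_mul, hrow i]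
        ring
      have hcol : ∑ i, ∑ j, W i j * b j = ∑ j, b j := by
        rw [Finset.sum_comm]
        refine Finset.sum_congr rfl fun j _ => ?_
        rw [← Finset.sum_mul]
        have hcs : ∑ i, W i j = 1 := by
          rw [Finset.sum_congr rfl fun i _ => hsym i j, hrow j]
        rw [hcs, one_mul]
      have e1 : ∑ i, ∑ j, W i j * (if i = j then 0 else b i + b j)
          = ∑ i, ((b i * 1 + (∑ j, W i j * b j)) - (W i i * b i + W i i * b i)) :=
        Finset.sum_congr rfl fun i _ => inner i
      have e2 : ∑ i, ((b i * 1 + (∑ j, W i j * b j)) - (W i i * b i + W i i * b i))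
          = (∑ i, (b i * 1 + (∑ j, W i j * b j))) - ∑ i, (W i i * b i + W i i * b i) :=
        Finset.sum_sub_distrib _ _
      have e3 : ∑ i, (b i * 1 + (∑ j, W i j * b j))
          = (∑ i, b i * 1) + ∑ i, ∑ j, W i j * b j := Finset.sum_add_distrib
      have e4 : ∑ i, (W i i * b i + W i i * b i)
          = (∑ i, W i i * b i) + ∑ i, W i i * b i := Finset.sum_add_distrib
      have e5 : ∑ i, b i * 1 = ∑ i, b i :=
        Finset.sum_congr rfl fun i _ => mul_one (b i)
      have e6 : ∑ i, b i * (1 - W i i) = ∑ i, (b i - W i i * b i) :=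
        Finset.sum_congr rfl fun i _ => by ring
      have e7 : ∑ i, (b i - W i i * b i) = (∑ i, b i) - ∑ i, W i i * b i :=
        Finset.sum_sub_distrib _ _
      linarith [e1, e2, e3, e4, e5, e6, e7, hcol]
    rw [h5] at h4
    linarith
  -- assemble
  have hVdiff : Vfun hn0 W γ x (k+1) - Vfun hn0 W γ x k
      = ∑ i, (max (|Y i| - alpha W γ i) 0 - max (|y i| - alpha W γ i) 0) := by
    simp only [Vfun]
    rw [hm, ← hmdef, ← Finset.sum_sub_distrib]
  rw [hVdiff]
  have hle1 : ∑ i, (max (|Y i| - alpha W γ i) 0 - max (|y i| - alpha W γ i) 0)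
      ≤ ∑ i, (σ i * (Y i - y i) - b i * (1 - W i i)) :=
    Finset.sum_le_sum fun i _ => hstep i
  have hle2 : ∑ i, (σ i * (Y i - y i) - b i * (1 - W i i))
      = (∑ i, σ i * (S i - ((d i : ℤ) : ℝ))) - ∑ i, b i * (1 - W i i) := by
    rw [Finset.sum_sub_distrib]
    congr 1
    exact Finset.sum_congr rfl fun i _ => by rw [hYy i]
  linarith [key, hle1, hle2.le, hle2.ge]
end

section
/- Situation S1 forces a strict Lyapunov decrease: under Assumption 1 and the γ/α setup, suppose at time k that m(k+1) = m(k) and there is an edge (i,j) of G with x_i(k) > m(k) + 1 + α_i (i.e. i ∈ X4(k) ∪ X5(k) ∪ X6(k)) and x_j(k) < m(k) + 1 (i.e. j ∈ X1(k) ∪ X2(k)). Then V(k+1) − V(k) ≤ −min{γ, δ}, where δ = min over edges (p,q) of G of w_pq. -/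
open Finset Filter

private lemma maxabs_L0 (w γ c g d : ℝ) (hγ : 0 < γ) (hc1 : c ≤ 1 - 2*γ)
    (hd0 : 0 ≤ d) (hdw : d ≤ 1 - w) (hdg : d ≤ g) :
    max (|c + g - 1| - (1 - w + γ)) 0 - max (|c - 1| - (1 - w + γ)) 0 - g ≤ -d := by
  have habs : |c - 1| = 1 - c := by rw [abs_of_nonpos (by linarith)]; ring
  have key : max (|c + g - 1| - (1 - w + γ)) 0 ≤ max (1 - c - (1 - w + γ)) 0 + (g - d) := by
    apply max_le
    · rcases abs_cases (c + g - 1) with ⟨h1, _⟩ | ⟨h1, _⟩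
      · have := le_max_right (1 - c - (1 - w + γ)) 0
        linarith
      · have := le_max_left (1 - c - (1 - w + γ)) 0
        linarith
    · have := le_max_right (1 - c - (1 - w + γ)) 0
      linarith
  rw [habs]; linarith

private lemma maxabs_L1 (w γ c g s μ : ℝ) (hγ : 0 < γ) (hc0 : 0 ≤ c) (hw1 : w ≤ 1)
    (hg : w ≤ g) (hs : 1 - g ≤ s) (hμγ : μ ≤ γ) (hμs : μ ≤ s)
    (hstr : μ ≤ 0 ∨ (1 - w + γ) + γ ≤ c) :
    max (|c + g - 1| - (1 - w + γ)) 0 - max (|1 + c - 1| - (1 - w + γ)) 0 - (g - 1) ≤ s - μ := by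
  have hone : |1 + c - 1| = c := by rw [show (1:ℝ) + c - 1 = c by ring, abs_of_nonneg hc0]
  rw [hone]
  rcases le_or_gt (1 + (1 - w + γ)) (c + g) with hA | hB
  · have e1 : max (|c + g - 1| - (1 - w + γ)) 0 = c + g - 1 - (1 - w + γ) := by
      rw [abs_of_nonneg (by linarith)]
      exact max_eq_left (by linarith)
    have := le_max_left (c - (1 - w + γ)) 0
    linarith
  · have e1 : max (|c + g - 1| - (1 - w + γ)) 0 = 0 := by
      apply max_eq_right
      have : |c + g - 1| ≤ 1 - w + γ := abs_le.mpr ⟨by linarith, by linarith⟩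
      linarith
    rcases hstr with h | h
    · have := le_max_right (c - (1 - w + γ)) 0
      linarith
    · have e2 : max (c - (1 - w + γ)) 0 = c - (1 - w + γ) := max_eq_left (by linarith)
      linarith

private lemma maxabs_L2 (w γ c g s μ F : ℝ) (hγ : 0 < γ) (hc0 : 0 ≤ c) (hF : 2 ≤ F)
    (hw2 : 1/2 + 2*γ ≤ w) (hw1 : w ≤ 1)
    (hg : 1 + w - s ≤ g) (hgF : w * F ≤ g) (hμγ : μ ≤ γ) (hμs : μ ≤ s) :
    max (|c + g - 1| - (1 - w + γ)) 0 - max (|F + c - 1| - (1 - w + γ)) 0 - (g - F) ≤ s - μ := by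
  have hfy : max (|F + c - 1| - (1 - w + γ)) 0 = F + c - 1 - (1 - w + γ) := by
    rw [abs_of_nonneg (by linarith)]
    exact max_eq_left (by linarith)
  rw [hfy]
  rcases le_or_gt (1 + (1 - w + γ)) (c + g) with hA | hB
  · have e1 : max (|c + g - 1| - (1 - w + γ)) 0 = c + g - 1 - (1 - w + γ) := by
      rw [abs_of_nonneg (by linarith)]
      exact max_eq_left (by linarith)
    linarith
  · have hw0 : (0:ℝ) ≤ w := by linarith
    have h2w : 2 * w ≤ g := by nlinarith [mul_le_mul_of_nonneg_left hF hw0]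
    have e1 : max (|c + g - 1| - (1 - w + γ)) 0 = 0 := by
      apply max_eq_right
      have : |c + g - 1| ≤ 1 - w + γ := abs_le.mpr ⟨by linarith, by linarith⟩
      linarith
    linarith

/-- Situation S1: an edge between a node in `X4 ∪ X5 ∪ X6` and a node in `X1 ∪ X2`
forces a strict Lyapunov decrease of at least `min{γ, δ}`. -/
theorem situation_S1_decrease {n : ℕ} (hn : 1 < n)
    (G : SimpleGraph (Fin n)) (hG : G.Connected)
    (W : Matrix (Fin n) (Fin n) ℝ) (hW : Assumption1 G W)
    (x : ℕ → Fin n → ℝ) (hx : Traj W x)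
    (γ : ℝ) (hγ : GammaSetup W x γ)
    (k : ℕ)
    (hm : mfun (Nat.zero_lt_one.trans hn) x (k + 1) = mfun (Nat.zero_lt_one.trans hn) x k)
    (i j : Fin n) (hadj : G.Adj i j)
    (hi : (mfun (Nat.zero_lt_one.trans hn) x k : ℝ) + 1 + alpha W γ i < x k i)
    (hj : x k j < (mfun (Nat.zero_lt_one.trans hn) x k : ℝ) + 1) :
    Vfun (Nat.zero_lt_one.trans hn) W γ x (k + 1) -
      Vfun (Nat.zero_lt_one.trans hn) W γ x k ≤ -min γ (deltaMin G W) := by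
  obtain ⟨hsym, hnn, hrow, hdiag, hzero, hedge⟩ := hW
  obtain ⟨hγ0, hγc⟩ := hγ
  set m : ℤ := mfun (Nat.zero_lt_one.trans hn) x k with hmdef
  set F : Fin n → ℤ := fun p => ⌊x k p⌋ - m with hFdef
  set cc : Fin n → ℝ := fun p => x k p - (⌊x k p⌋ : ℝ) with hccdef
  set g : Fin n → ℝ := fun p => ∑ q, W p q * ((F q : ℝ)) with hgdef
  set s0 : Fin n → ℝ := fun p => ∑ q, if F q = 0 then W p q else 0 with hs0def
  set dd : Fin n → ℝ := fun p => ∑ q, if F q = 0 then 0 else W p q with hdddef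
  set μ : ℝ := min γ (deltaMin G W) with hμdef
  have hccq : ∀ p, x k p - (⌊x k p⌋ : ℝ) = cc p := fun p => by rw [hccdef]
  have hF0 : ∀ p, 0 ≤ F p := by
    intro p
    have h1 : m ≤ ⌊x k p⌋ := by
      rw [hmdef]
      exact Finset.inf'_le _ (Finset.mem_univ p)
    simp only [hFdef]
    omega
  have hcc0 : ∀ p, 0 ≤ cc p := by
    intro p; rw [hccdef]
    exact sub_nonneg.mpr (Int.floor_le _)
  have hcclt : ∀ p, cc p < 1 := by
    intro p; simp only [hccdef]
    have := Int.lt_floor_add_one (x k p); linarith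
  have hcc1 : ∀ p, cc p ≤ 1 - 2*γ := by
    intro p
    have := (hγc p k).2.2.1
    rw [hccq p] at this
    linarith
  have hwle : ∀ p, W p p ≤ 1 := by
    intro p
    rw [← hrow p]
    exact Finset.single_le_sum (fun q _ => hnn p q) (Finset.mem_univ p)
  have hw2 : ∀ p, 1/2 + 2*γ ≤ W p p := by
    intro p
    have := (hγc p k).2.2.2
    linarith
  have hxk : ∀ p, x k p = ((F p : ℝ)) + cc p + (m:ℝ) := by
    intro p
    simp only [hFdef, hccdef]
    push_cast
    ring
  have hxk1 : ∀ p, x (k+1) p = cc p + g p + (m:ℝ) := by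
    intro p
    rw [hx k p]
    have h1 : (∑ q, W p q * (⌊x k q⌋ : ℝ)) = g p + (m:ℝ) := by
      have h2 : ∀ q, W p q * (⌊x k q⌋:ℝ) = W p q * ((F q:ℝ)) + W p q * (m:ℝ) := by
        intro q
        simp only [hFdef]
        push_cast
        ring
      rw [Finset.sum_congr rfl fun q _ => h2 q, Finset.sum_add_distrib, ← Finset.sum_mul,
        hrow p, one_mul, hgdef]
    rw [h1, ← hccq p]
    ring
  have hg_ge : ∀ p, W p p * ((F p:ℝ)) ≤ g p := by
    intro p
    simp only [hgdef]
    exact Finset.single_le_sum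
      (fun q _ => mul_nonneg (hnn p q) (Int.cast_nonneg_iff.mpr (hF0 q))) (Finset.mem_univ p)
  have hs0nn : ∀ p, 0 ≤ s0 p := by
    intro p
    rw [hs0def]
    apply Finset.sum_nonneg
    intro q _
    split_ifs
    · exact hnn p q
    · exact le_refl 0
  have hFj : F j = 0 := by
    have hfl : ⌊x k j⌋ < m + 1 := by
      rw [Int.floor_lt]
      push_cast
      exact hj
    have h0 := hF0 j
    simp only [hFdef] at h0 ⊢
    omega
  have hFi : 1 ≤ F i := by
    have hα0 : (0:ℝ) ≤ alpha W γ i := by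
      have e : alpha W γ i = 1 - W i i + γ := rfl
      rw [e]; linarith [hwle i]
    have hi2 := hi
    rw [hxk i] at hi2
    have h2 : (0:ℝ) < ((F i:ℝ)) := by linarith [hcclt i]
    have h3 : (0:ℤ) < F i := by exact_mod_cast h2
    omega
  have hδij : deltaMin G W ≤ W i j := by
    apply csInf_le
    · exact ⟨0, fun r hr => by obtain ⟨p, q, hpq, rfl⟩ := hr; exact hnn p q⟩
    · exact ⟨i, j, hadj, rfl⟩
  have hWijs0 : W i j ≤ s0 i := by
    simp only [hs0def]
    have h := Finset.single_le_sum (f := fun q => if F q = 0 then W i q else 0)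
      (fun q _ => by split_ifs; exacts [hnn i q, le_refl 0]) (Finset.mem_univ j)
    simpa [hFj] using h
  have hμγ : μ ≤ γ := min_le_left _ _
  have hμs0i : μ ≤ s0 i := le_trans (le_trans (min_le_right _ _) hδij) hWijs0
  have hbal : ∑ p, (if F p = 0 then -(dd p) else s0 p) = 0 := by
    have h1 : ∀ p, (if F p = 0 then -(dd p) else s0 p)
        = (if F p = 0 then (0:ℝ) else s0 p) - (if F p = 0 then dd p else 0) := by
      intro p; split <;> ring
    rw [Finset.sum_congr rfl fun p _ => h1 p, Finset.sum_sub_distrib]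
    have h2 : ∑ p, (if F p = 0 then (0:ℝ) else s0 p) = ∑ p, (if F p = 0 then dd p else 0) := by
      calc ∑ p, (if F p = 0 then (0:ℝ) else s0 p)
          = ∑ p, ∑ q, (if F p = 0 then 0 else if F q = 0 then W p q else 0) := by
            refine Finset.sum_congr rfl fun p _ => ?_
            by_cases hp : F p = 0
            · simp [hp]
            · simp only [hp, if_false, hs0def]
        _ = ∑ q, ∑ p, (if F p = 0 then 0 else if F q = 0 then W p q else 0) := Finset.sum_comm
        _ = ∑ q, (if F q = 0 then dd q else 0) := by
            refine Finset.sum_congr rfl fun q _ => ?_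
            by_cases hq : F q = 0
            · simp only [hq, if_true, hdddef]
              refine Finset.sum_congr rfl fun p _ => ?_
              by_cases hp : F p = 0
              · simp [hp]
              · simp [hp, hsym p q]
            · simp [hq]
    rw [h2, sub_self]
  have hsumg : ∑ p, g p = ∑ p, ((F p:ℝ)) := by
    simp only [hgdef]
    calc ∑ p, ∑ q, W p q * ((F q:ℝ)) = ∑ q, ∑ p, W p q * ((F q:ℝ)) := Finset.sum_comm
      _ = ∑ q, ((F q:ℝ)) := by
          refine Finset.sum_congr rfl fun q _ => ?_
          rw [← Finset.sum_mul]
          have h3 : ∑ p, W p q = 1 := by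
            rw [Finset.sum_congr rfl fun p _ => hsym p q]
            exact hrow q
          rw [h3, one_mul]
  have hV1 : Vfun (Nat.zero_lt_one.trans hn) W γ x (k+1)
      = ∑ p, max (|cc p + g p - 1| - alpha W γ p) 0 := by
    simp only [Vfun]
    rw [hm]
    refine Finset.sum_congr rfl fun p _ => ?_
    have e : x (k+1) p - (m:ℝ) - 1 = cc p + g p - 1 := by rw [hxk1 p]; ring
    rw [e]
  have hV0 : Vfun (Nat.zero_lt_one.trans hn) W γ x k
      = ∑ p, max (|((F p:ℝ)) + cc p - 1| - alpha W γ p) 0 := by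
    simp only [Vfun]
    rw [← hmdef]
    refine Finset.sum_congr rfl fun p _ => ?_
    have e : x k p - (m:ℝ) - 1 = ((F p:ℝ)) + cc p - 1 := by rw [hxk p]; ring
    rw [e]
  have hkey : ∀ p, max (|cc p + g p - 1| - alpha W γ p) 0
      - max (|((F p:ℝ)) + cc p - 1| - alpha W γ p) 0
      ≤ (g p - ((F p:ℝ))) + ((if F p = 0 then -(dd p) else s0 p) - (if p = i then μ else 0)) := by
    intro p
    have halphaeq : alpha W γ p = 1 - W p p + γ := rfl
    by_cases hp : F p = 0
    · -- level-0 node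
      have hpi : p ≠ i := by
        intro h; rw [h] at hp; omega
      rw [if_pos hp, if_neg hpi]
      have hdd0 : 0 ≤ dd p := by
        rw [hdddef]
        apply Finset.sum_nonneg
        intro q _
        split_ifs
        · exact le_refl 0
        · exact hnn p q
      have hddw : dd p ≤ 1 - W p p := by
        rw [hdddef]
        have hle : ∀ q ∈ Finset.univ,
            (if F q = 0 then (0:ℝ) else W p q) ≤ (W p q - if q = p then W p q else 0) := by
          intro q _
          by_cases hq : q = p
          · subst hq; rw [if_pos hp, if_pos rfl]; simp
          · rw [if_neg hq]
            by_cases hq0 : F q = 0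
            · rw [if_pos hq0]; linarith [hnn p q]
            · rw [if_neg hq0]; linarith
        calc (∑ q, if F q = 0 then (0:ℝ) else W p q)
            ≤ ∑ q, (W p q - if q = p then W p q else 0) := Finset.sum_le_sum hle
          _ = 1 - W p p := by
              rw [Finset.sum_sub_distrib, hrow p, Finset.sum_ite_eq' Finset.univ p (fun q => W p q)]
              simp
      have hddg : dd p ≤ g p := by
        rw [hdddef, hgdef]
        refine Finset.sum_le_sum fun q _ => ?_
        by_cases hq : F q = 0
        · rw [if_pos hq]
          have e : ((F q:ℝ)) = 0 := by exact_mod_cast hq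
          rw [e]; simp
        · rw [if_neg hq]
          have h1q : (1:ℝ) ≤ ((F q:ℝ)) := by
            exact_mod_cast (show (1:ℤ) ≤ F q by have := hF0 q; omega)
          nlinarith [hnn p q]
      have hres := maxabs_L0 (W p p) γ (cc p) (g p) (dd p) hγ0 (hcc1 p) hdd0 hddw hddg
      rw [halphaeq]
      have hFpr : ((F p:ℝ)) = 0 := by exact_mod_cast hp
      rw [hFpr]
      have e0 : (0:ℝ) + cc p - 1 = cc p - 1 := by ring
      rw [e0]
      linarith
    · -- high node
      have hp1 : 1 ≤ F p := by have := hF0 p; omega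
      rw [if_neg hp]
      have hs : 1 - g p ≤ s0 p := by
        have h1 : 1 - g p = ∑ q, W p q * (1 - ((F q:ℝ))) := by
          have e : ∀ q, W p q * (1 - ((F q:ℝ))) = W p q - W p q * ((F q:ℝ)) := fun q => by ring
          rw [Finset.sum_congr rfl fun q _ => e q, Finset.sum_sub_distrib, hrow p, hgdef]
        rw [h1, hs0def]
        refine Finset.sum_le_sum fun q _ => ?_
        by_cases hq : F q = 0
        · rw [if_pos hq]
          have e : ((F q:ℝ)) = 0 := by exact_mod_cast hq
          rw [e]; simp
        · rw [if_neg hq]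
          have h1q : (1:ℝ) ≤ ((F q:ℝ)) := by
            exact_mod_cast (show (1:ℤ) ≤ F q by have := hF0 q; omega)
          nlinarith [hnn p q]
      have hμγ' : (if p = i then μ else 0) ≤ γ := by
        split_ifs
        · exact hμγ
        · exact le_of_lt hγ0
      have hμs' : (if p = i then μ else 0) ≤ s0 p := by
        split_ifs with h
        · rw [h]; exact hμs0i
        · exact hs0nn p
      by_cases hp1' : F p = 1
      · -- F p = 1, use L1
        have hcast : ((F p:ℝ)) = 1 := by exact_mod_cast hp1'
        rw [hcast]
        have hgw : W p p ≤ g p := by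
          have := hg_ge p
          rw [hcast] at this
          linarith
        have hstr : (if p = i then μ else 0) ≤ 0 ∨ (1 - W p p + γ) + γ ≤ cc p := by
          by_cases hpi : p = i
          · right
            subst hpi
            have hi2 := hi
            rw [hxk p, hcast] at hi2
            have h1 : alpha W γ p < cc p := by linarith
            rw [halphaeq] at h1
            have h2 := (hγc p k).1
            rw [hccq p] at h2
            have h3 := h2 (by linarith)
            linarith
          · left
            rw [if_neg hpi]
        have hres := maxabs_L1 (W p p) γ (cc p) (g p) (s0 p) (if p = i then μ else 0)
          hγ0 (hcc0 p) (hwle p) hgw hs hμγ' hμs' hstr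
        rw [halphaeq]
        linarith
      · -- F p ≥ 2, use L2
        have hp2 : 2 ≤ F p := by omega
        have hcast2 : (2:ℝ) ≤ ((F p:ℝ)) := by exact_mod_cast hp2
        have hgF : W p p * ((F p:ℝ)) ≤ g p := hg_ge p
        have hg2 : 1 + W p p - s0 p ≤ g p := by
          have step : ∑ q, (if q = p then W p p * ((F p:ℝ)) else W p q) ≤ g p + s0 p := by
            rw [hgdef, hs0def, ← Finset.sum_add_distrib]
            refine Finset.sum_le_sum fun q _ => ?_
            by_cases hq : q = p
            · subst hq
              rw [if_pos rfl, if_neg hp]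
              simp
            · rw [if_neg hq]
              by_cases hq0 : F q = 0
              · rw [if_pos hq0]
                have e : ((F q:ℝ)) = 0 := by exact_mod_cast hq0
                rw [e]; simp
              · rw [if_neg hq0]
                have h1q : (1:ℝ) ≤ ((F q:ℝ)) := by
                  exact_mod_cast (show (1:ℤ) ≤ F q by have := hF0 q; omega)
                nlinarith [hnn p q]
          have lhs_eq : ∑ q, (if q = p then W p p * ((F p:ℝ)) else W p q)
              = 1 + W p p * ((F p:ℝ)) - W p p := by
            have e : ∀ q, (if q = p then W p p * ((F p:ℝ)) else W p q)
                = W p q + (if q = p then W p p * ((F p:ℝ)) - W p p else 0) := by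
              intro q
              by_cases hq : q = p
              · subst hq; simp
              · simp [hq]
            rw [Finset.sum_congr rfl fun q _ => e q, Finset.sum_add_distrib, hrow p,
              Finset.sum_ite_eq' Finset.univ p (fun _ => W p p * ((F p:ℝ)) - W p p)]
            simp only [Finset.mem_univ, if_true]
            ring
          rw [lhs_eq] at step
          have hprod : 0 ≤ W p p * (((F p:ℝ)) - 2) :=
            mul_nonneg (hnn p p) (by linarith)
          have hexp : W p p * (((F p:ℝ)) - 2) = W p p * ((F p:ℝ)) - W p p * 2 := by ring
          linarith
        have hres := maxabs_L2 (W p p) γ (cc p) (g p) (s0 p) (if p = i then μ else 0) ((F p:ℝ))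
          hγ0 (hcc0 p) hcast2 (hw2 p) (hwle p) hg2 hgF hμγ' hμs'
        rw [halphaeq]
        linarith
  rw [hV1, hV0, ← Finset.sum_sub_distrib]
  have hle := Finset.sum_le_sum fun p (_ : p ∈ Finset.univ) => hkey p
  have e1 : ∑ p, ((g p - ((F p:ℝ)))
      + ((if F p = 0 then -(dd p) else s0 p) - (if p = i then μ else 0))) = -μ := by
    rw [Finset.sum_add_distrib, Finset.sum_sub_distrib, Finset.sum_sub_distrib, hbal, hsumg,
      Finset.sum_ite_eq' Finset.univ i (fun _ => μ)]
    simp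
  linarith
end

section
/- Situation S2 forces a strict Lyapunov decrease: under Assumption 1 and the γ/α setup, suppose at time k that m(k+1) = m(k) and there is an edge (i,j) of G with x_i(k) ≥ m(k) + 2 (i.e. i ∈ X5(k) ∪ X6(k)) and m(k) + 1 ≤ x_j(k) ≤ m(k) + 1 + α_j (i.e. j ∈ X3(k)). Then V(k+1) − V(k) ≤ −min{γ, δ}, where δ = min over edges (p,q) of G of w_pq. -/
open Finset Filter

private lemma pos_part_add (a : ℝ) : max a 0 = a + max (-a) 0 := by
  rcases le_total a 0 with h | h
  · rw [max_eq_right h, max_eq_left (neg_nonneg.mpr h)]; ring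
  · rw [max_eq_left h, max_eq_right (neg_nonpos.mpr h)]; ring

private lemma Lcase_aux (c u α K : ℝ) (hc1 : c < 1) (hu : 0 ≤ u) (hKu : K ≤ u)
    (hKα : K ≤ α) :
    max (|c + u - 1| - α) 0 - max (|c - 1| - α) 0 - u ≤ -K := by
  have habs : |c - 1| = 1 - c := by
    rw [abs_sub_comm]; exact abs_of_nonneg (by linarith)
  have hm0 : (0:ℝ) ≤ max (1 - c - α) 0 := le_max_right _ _
  have hm1 : 1 - c - α ≤ max (1 - c - α) 0 := le_max_left _ _
  rw [habs]
  rcases abs_cases (c + u - 1) with ⟨h, h'⟩ | ⟨h, h'⟩ <;> rw [h]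
  · have : max (c + u - 1 - α) 0 ≤ max (1 - c - α) 0 + (u - K) :=
      max_le (by linarith) (by linarith)
    linarith
  · have : max (-(c + u - 1) - α) 0 ≤ max (1 - c - α) 0 + (u - K) :=
      max_le (by linarith) (by linarith)
    linarith

private lemma Hcase_aux (t u α K' : ℝ) (ht : 0 ≤ t) (h1 : -α ≤ t + u)
    (h2 : max (α - t - u) 0 ≤ max (α - t) 0 + K') :
    max (|t + u| - α) 0 - max (|t| - α) 0 - u ≤ K' := by
  have habs : |t| = t := abs_of_nonneg ht
  have hkey : max (|t + u| - α) 0 = max (t + u - α) 0 := by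
    rcases abs_cases (t + u) with ⟨h, _⟩ | ⟨h, hneg⟩
    · rw [h]
    · rw [h]
      have ha : -(t + u) - α ≤ 0 := by linarith
      have hb : t + u - α ≤ 0 := by linarith
      rw [max_eq_right ha, max_eq_right hb]
  rw [habs, hkey, pos_part_add (t + u - α), pos_part_add (t - α)]
  have e1 : -(t + u - α) = α - t - u := by ring
  have e2 : -(t - α) = α - t := by ring
  rw [e1, e2]
  linarith

/-- Situation S2: an edge between a node in `X5 ∪ X6` and a node in `X3`
forces a strict Lyapunov decrease of at least `min{γ, δ}`. -/
theorem situation_S2_decrease {n : ℕ} (hn : 1 < n)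
    (G : SimpleGraph (Fin n)) (hG : G.Connected)
    (W : Matrix (Fin n) (Fin n) ℝ) (hW : Assumption1 G W)
    (x : ℕ → Fin n → ℝ) (hx : Traj W x)
    (γ : ℝ) (hγ : GammaSetup W x γ)
    (k : ℕ)
    (hm : mfun (Nat.zero_lt_one.trans hn) x (k + 1) = mfun (Nat.zero_lt_one.trans hn) x k)
    (i j : Fin n) (hadj : G.Adj i j)
    (hi : (mfun (Nat.zero_lt_one.trans hn) x k : ℝ) + 2 ≤ x k i)
    (hj1 : (mfun (Nat.zero_lt_one.trans hn) x k : ℝ) + 1 ≤ x k j)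
    (hj2 : x k j ≤ (mfun (Nat.zero_lt_one.trans hn) x k : ℝ) + 1 + alpha W γ j) :
    Vfun (Nat.zero_lt_one.trans hn) W γ x (k + 1) -
      Vfun (Nat.zero_lt_one.trans hn) W γ x k ≤ -min γ (deltaMin G W) := by
  obtain ⟨hsym, hnn, hrow, hdiag, hzero, hedge⟩ := hW
  obtain ⟨hγpos, hgap⟩ := hγ
  set m : ℤ := mfun (Nat.zero_lt_one.trans hn) x k with hm_def
  set u : Fin n → ℝ :=
    fun p => (∑ q, W p q * ((⌊x k q⌋ : ℝ))) - ((⌊x k p⌋ : ℝ)) with hu_def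
  -- basic facts
  have hFm : ∀ p : Fin n, m ≤ ⌊x k p⌋ := by
    intro p
    rw [hm_def]
    simp only [mfun]
    exact Finset.inf'_le _ (Finset.mem_univ p)
  have hflle : ∀ p : Fin n, ((⌊x k p⌋ : ℝ)) ≤ x k p := fun p => Int.floor_le _
  have hflub : ∀ p : Fin n, x k p < (⌊x k p⌋ : ℝ) + 1 := fun p => Int.lt_floor_add_one _
  have hW1 : ∀ p : Fin n, W p p ≤ 1 := by
    intro p
    have h := Finset.single_le_sum (f := W p) (fun q _ => hnn p q) (Finset.mem_univ p)
    rw [hrow p] at h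
    exact h
  have hαle : ∀ p : Fin n, alpha W γ p ≤ 1 / 2 - γ := by
    intro p
    have h := (hgap p k).2.2.2
    simp only [alpha]
    linarith
  have hαge : ∀ p : Fin n, γ ≤ alpha W γ p := by
    intro p
    simp only [alpha]
    linarith [hW1 p]
  have herase : ∀ p : Fin n, ∑ q ∈ Finset.univ.erase p, W p q = 1 - W p p := by
    intro p
    have h := Finset.add_sum_erase Finset.univ (W p) (Finset.mem_univ p)
    rw [hrow p] at h
    linarith
  have hx1 : ∀ p, x (k + 1) p = x k p + u p := by
    intro p
    rw [hx k p]
    simp only [hu_def]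
    ring
  have hu2 : ∀ p, u p = ∑ q, W p q * ((⌊x k q⌋ : ℝ) - (⌊x k p⌋ : ℝ)) := by
    intro p
    have h1 : ∑ q, W p q * ((⌊x k q⌋ : ℝ) - (⌊x k p⌋ : ℝ))
        = (∑ q, W p q * (⌊x k q⌋ : ℝ)) - (∑ q, W p q) * (⌊x k p⌋ : ℝ) := by
      rw [Finset.sum_mul, ← Finset.sum_sub_distrib]
      exact Finset.sum_congr rfl fun q _ => by ring
    simp only [hu_def]
    rw [h1, hrow p, one_mul]
  have hcol : ∀ q : Fin n, ∑ p, W p q = 1 := by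
    intro q
    have h : ∑ p, W p q = ∑ p, W q p := Finset.sum_congr rfl fun p _ => hsym p q
    rw [h, hrow q]
  have husum : ∑ p, u p = 0 := by
    have h1 : ∑ p, (∑ q, W p q * (⌊x k q⌋ : ℝ)) = ∑ q : Fin n, (⌊x k q⌋ : ℝ) := by
      rw [Finset.sum_comm]
      refine Finset.sum_congr rfl fun q _ => ?_
      rw [← Finset.sum_mul, hcol q, one_mul]
    simp only [hu_def]
    rw [Finset.sum_sub_distrib, h1, sub_self]
  -- the partition of nodes
  set Lset : Finset (Fin n) := Finset.univ.filter (fun q => ⌊x k q⌋ = m) with hLs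
  set Hset : Finset (Fin n) := Finset.univ.filter (fun q => ¬(⌊x k q⌋ = m)) with hHs
  set KH : Fin n → ℝ := fun p => ∑ q ∈ Lset, W p q with hKH
  set KL : Fin n → ℝ := fun p => ∑ q ∈ Hset, W p q with hKL
  set μ : ℝ := min γ (W i j) with hμ
  set B : Fin n → ℝ :=
    fun p => (if ⌊x k p⌋ = m then -(KL p) else KH p) - (if p = j then μ else 0) with hB
  have hsplit : ∀ g : Fin n → ℝ, ∑ q, g q = ∑ q ∈ Lset, g q + ∑ q ∈ Hset, g q := by
    intro g
    rw [hLs, hHs]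
    exact (Finset.sum_filter_add_sum_filter_not Finset.univ (fun q => ⌊x k q⌋ = m) g).symm
  -- the floors of i and j
  have hFj : ⌊x k j⌋ = m + 1 := by
    have h1 : m + 1 ≤ ⌊x k j⌋ := by
      rw [Int.le_floor]
      push_cast
      exact hj1
    have h2 : ⌊x k j⌋ < m + 2 := by
      rw [Int.floor_lt]
      have h3 := hαle j
      push_cast
      linarith [hj2, hγpos]
    omega
  have hFi : m + 2 ≤ ⌊x k i⌋ := by
    rw [Int.le_floor]
    push_cast
    exact hi
  have hiH : i ∈ Hset := by
    rw [hHs]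
    refine Finset.mem_filter.mpr ⟨Finset.mem_univ _, ?_⟩
    omega
  -- the per-node key estimate
  have key : ∀ p : Fin n,
      max (|x k p + u p - (m : ℝ) - 1| - alpha W γ p) 0
        - max (|x k p - (m : ℝ) - 1| - alpha W γ p) 0 - u p ≤ B p := by
    intro p
    by_cases hp : ⌊x k p⌋ = m
    · -- LOW CASE
      have hpj : p ≠ j := by
        intro h
        rw [h, hFj] at hp
        omega
      have hBp : B p = -(KL p) := by
        simp only [hB]
        rw [if_pos hp, if_neg hpj, sub_zero]
      have hu0 : 0 ≤ u p := by
        rw [hu2 p]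
        refine Finset.sum_nonneg fun q _ => mul_nonneg (hnn p q) ?_
        have h := hFm q
        rw [hp]
        have : ((m : ℝ)) ≤ ((⌊x k q⌋ : ℝ)) := by exact_mod_cast h
        linarith
      have hKLu : KL p ≤ u p := by
        rw [hu2 p, hsplit (fun q => W p q * ((⌊x k q⌋ : ℝ) - (⌊x k p⌋ : ℝ)))]
        have hL0 : ∑ q ∈ Lset, W p q * ((⌊x k q⌋ : ℝ) - (⌊x k p⌋ : ℝ)) = 0 := by
          refine Finset.sum_eq_zero fun q hq => ?_
          rw [hLs, Finset.mem_filter] at hq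
          rw [hq.2, hp]
          ring
        rw [hL0, zero_add]
        simp only [hKL]
        refine Finset.sum_le_sum fun q hq => ?_
        rw [hHs, Finset.mem_filter] at hq
        have h1 : m + 1 ≤ ⌊x k q⌋ := by
          have := hFm q
          omega
        have h2 : (1 : ℝ) ≤ (⌊x k q⌋ : ℝ) - (⌊x k p⌋ : ℝ) := by
          rw [hp]
          have : ((m : ℝ)) + 1 ≤ ((⌊x k q⌋ : ℝ)) := by exact_mod_cast h1
          linarith
        calc W p q = W p q * 1 := (mul_one _).symm
          _ ≤ W p q * ((⌊x k q⌋ : ℝ) - (⌊x k p⌋ : ℝ)) :=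
            mul_le_mul_of_nonneg_left h2 (hnn p q)
      have hKLα : KL p ≤ alpha W γ p := by
        have hsub : Hset ⊆ Finset.univ.erase p := by
          intro q hq
          rw [hHs, Finset.mem_filter] at hq
          refine Finset.mem_erase.mpr ⟨?_, Finset.mem_univ _⟩
          intro h
          exact hq.2 (by rw [h]; exact hp)
        have h1 := Finset.sum_le_sum_of_subset_of_nonneg hsub (fun q _ _ => hnn p q)
        rw [herase p] at h1
        simp only [hKL, alpha]
        linarith
      have hc1 : x k p - (m : ℝ) < 1 := by
        have h := hflub p
        rw [hp] at h
        linarith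
      have hL := Lcase_aux (x k p - (m : ℝ)) (u p) (alpha W γ p) (KL p) hc1 hu0 hKLu hKLα
      have e1 : x k p - (m : ℝ) + u p - 1 = x k p + u p - (m : ℝ) - 1 := by ring
      rw [e1] at hL
      rw [hBp]
      exact hL
    · -- HIGH CASE
      have hp1 : m + 1 ≤ ⌊x k p⌋ := by
        have := hFm p
        omega
      have hpH : p ∈ Hset := by
        rw [hHs]
        exact Finset.mem_filter.mpr ⟨Finset.mem_univ _, hp⟩
      have ht0 : (0 : ℝ) ≤ x k p - (m : ℝ) - 1 := by
        have h := hflle p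
        have h2 : ((m : ℝ)) + 1 ≤ ((⌊x k p⌋ : ℝ)) := by exact_mod_cast hp1
        linarith
      have hKH0 : 0 ≤ KH p := by
        simp only [hKH]
        exact Finset.sum_nonneg fun q _ => hnn p q
      have hKHα : KH p ≤ 1 - W p p := by
        have hsub : Lset ⊆ Finset.univ.erase p := by
          intro q hq
          rw [hLs, Finset.mem_filter] at hq
          refine Finset.mem_erase.mpr ⟨?_, Finset.mem_univ _⟩
          intro h
          exact hp (by rw [← h]; exact hq.2)
        have h1 := Finset.sum_le_sum_of_subset_of_nonneg hsub (fun q _ _ => hnn p q)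
        rw [herase p] at h1
        simpa only [hKH] using h1
      have hsplitu : -(u p) = ∑ q ∈ Lset, W p q * ((⌊x k p⌋ : ℝ) - (⌊x k q⌋ : ℝ))
          + ∑ q ∈ Hset, W p q * ((⌊x k p⌋ : ℝ) - (⌊x k q⌋ : ℝ)) := by
        have h1 : -(u p) = ∑ q, W p q * ((⌊x k p⌋ : ℝ) - (⌊x k q⌋ : ℝ)) := by
          rw [hu2 p, ← Finset.sum_neg_distrib]
          exact Finset.sum_congr rfl fun q _ => by ring
        rw [h1]
        exact hsplit _
      have hLpart : ∑ q ∈ Lset, W p q * ((⌊x k p⌋ : ℝ) - (⌊x k q⌋ : ℝ))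
          = KH p * ((⌊x k p⌋ : ℝ) - (m : ℝ)) := by
        simp only [hKH]
        rw [Finset.sum_mul]
        refine Finset.sum_congr rfl fun q hq => ?_
        rw [hLs, Finset.mem_filter] at hq
        rw [hq.2]
      by_cases hpj : p = j
      · -- node j
        subst hpj
        have hBp : B p = KH p - μ := by
          simp [hB, hp]
        have hHle : ∑ q ∈ Hset, W p q * ((⌊x k p⌋ : ℝ) - (⌊x k q⌋ : ℝ)) ≤ -(W p i) := by
          have hstep : ∀ q ∈ Hset, W p q * ((⌊x k p⌋ : ℝ) - (⌊x k q⌋ : ℝ))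
              ≤ (if q = i then -(W p i) else 0) := by
            intro q hq
            rw [hHs, Finset.mem_filter] at hq
            have hq1 : m + 1 ≤ ⌊x k q⌋ := by
              have := hFm q
              rcases lt_or_eq_of_le this with h | h
              · omega
              · exact absurd h.symm hq.2
            by_cases hqi : q = i
            · subst hqi
              rw [if_pos rfl, hFj]
              have h2 : (0 : ℝ) ≤ (⌊x k q⌋ : ℝ) - (m : ℝ) - 2 := by
                have : ((m : ℝ)) + 2 ≤ ((⌊x k q⌋ : ℝ)) := by exact_mod_cast hFi
                linarith
              have h3 := mul_nonneg (hnn p q) h2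
              push_cast
              nlinarith [hnn p q]
            · rw [if_neg hqi]
              apply mul_nonpos_of_nonneg_of_nonpos (hnn p q)
              have h2 : ((m : ℝ)) + 1 ≤ ((⌊x k q⌋ : ℝ)) := by exact_mod_cast hq1
              rw [hFj]
              push_cast
              linarith
          calc ∑ q ∈ Hset, W p q * ((⌊x k p⌋ : ℝ) - (⌊x k q⌋ : ℝ))
              ≤ ∑ q ∈ Hset, (if q = i then -(W p i) else 0) := Finset.sum_le_sum hstep
            _ = -(W p i) := by
                rw [Finset.sum_ite_eq' Hset i (fun _ => -(W p i)), if_pos hiH]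
        have hv : -(u p) ≤ KH p - W p i := by
          rw [hsplitu, hLpart]
          have he : (⌊x k p⌋ : ℝ) - (m : ℝ) = 1 := by
            rw [hFj]
            push_cast
            ring
          rw [he, mul_one]
          linarith [hHle]
        have hfr : x k p - (m : ℝ) - 1 ≤ 1 - W p p := by
          by_contra hcon
          push_neg at hcon
          have hfr2 : x k p - (⌊x k p⌋ : ℝ) > 1 - W p p := by
            rw [hFj]
            push_cast
            linarith
          have hg := (hgap p k).1 hfr2
          rw [hFj] at hg
          push_cast at hg
          have hc_le : x k p - (m : ℝ) - 1 ≤ alpha W γ p := by linarith [hj2]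
          simp only [alpha] at hc_le
          linarith
        have hβ : γ ≤ alpha W γ p - (x k p - (m : ℝ) - 1) := by
          simp only [alpha]
          linarith [hfr]
        have hμγ : μ ≤ γ := min_le_left _ _
        have hμW : μ ≤ W p i := by
          rw [hμ, hsym i p]
          exact min_le_right _ _
        have h1 : -(alpha W γ p) ≤ (x k p - (m : ℝ) - 1) + u p := by
          have hα := hαge p
          simp only [alpha] at hα ⊢
          linarith [hv, hKHα, hnn p i, hγpos, ht0]
        have h2 : max (alpha W γ p - (x k p - (m : ℝ) - 1) - u p) 0
            ≤ max (alpha W γ p - (x k p - (m : ℝ) - 1)) 0 + (KH p - μ) := by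
          have hmax : alpha W γ p - (x k p - (m : ℝ) - 1)
              ≤ max (alpha W γ p - (x k p - (m : ℝ) - 1)) 0 := le_max_left _ _
          refine max_le ?_ ?_
          · linarith [hv, hμW, hmax]
          · linarith [hmax, hβ, hμγ, hKH0]
        have hH := Hcase_aux (x k p - (m : ℝ) - 1) (u p) (alpha W γ p) (KH p - μ) ht0 h1 h2
        have e1 : x k p - (m : ℝ) - 1 + u p = x k p + u p - (m : ℝ) - 1 := by ring
        rw [e1] at hH
        rw [hBp]
        exact hH
      · -- generic high node
        have hBp : B p = KH p := by
          simp only [hB]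
          rw [if_neg hp, if_neg hpj, sub_zero]
        by_cases hd : ⌊x k p⌋ = m + 1
        · -- level m+1
          have hHle : ∑ q ∈ Hset, W p q * ((⌊x k p⌋ : ℝ) - (⌊x k q⌋ : ℝ)) ≤ 0 := by
            refine Finset.sum_nonpos fun q hq => ?_
            rw [hHs, Finset.mem_filter] at hq
            have hq1 : m + 1 ≤ ⌊x k q⌋ := by
              have := hFm q
              rcases lt_or_eq_of_le this with h | h
              · omega
              · exact absurd h.symm hq.2
            apply mul_nonpos_of_nonneg_of_nonpos (hnn p q)
            have h2 : ((m : ℝ)) + 1 ≤ ((⌊x k q⌋ : ℝ)) := by exact_mod_cast hq1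
            rw [hd]
            push_cast
            linarith
          have hv : -(u p) ≤ KH p := by
            rw [hsplitu, hLpart]
            have he : (⌊x k p⌋ : ℝ) - (m : ℝ) = 1 := by
              rw [hd]
              push_cast
              ring
            rw [he, mul_one]
            linarith [hHle]
          have h1 : -(alpha W γ p) ≤ (x k p - (m : ℝ) - 1) + u p := by
            have hα := hαge p
            simp only [alpha] at hα ⊢
            linarith [hv, hKHα, hγpos, ht0]
          have h2 : max (alpha W γ p - (x k p - (m : ℝ) - 1) - u p) 0
              ≤ max (alpha W γ p - (x k p - (m : ℝ) - 1)) 0 + KH p := by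
            have hmax : alpha W γ p - (x k p - (m : ℝ) - 1)
                ≤ max (alpha W γ p - (x k p - (m : ℝ) - 1)) 0 := le_max_left _ _
            have hmax0 : (0:ℝ) ≤ max (alpha W γ p - (x k p - (m : ℝ) - 1)) 0 :=
              le_max_right _ _
            refine max_le ?_ ?_
            · linarith [hv, hmax]
            · linarith [hmax0, hKH0]
          have hH := Hcase_aux (x k p - (m : ℝ) - 1) (u p) (alpha W γ p) (KH p) ht0 h1 h2
          have e1 : x k p - (m : ℝ) - 1 + u p = x k p + u p - (m : ℝ) - 1 := by ring
          rw [e1] at hH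
          rw [hBp]
          exact hH
        · -- level ≥ m+2
          have hp2 : m + 2 ≤ ⌊x k p⌋ := by omega
          have hD2 : (2 : ℝ) ≤ (⌊x k p⌋ : ℝ) - (m : ℝ) := by
            have : ((m : ℝ)) + 2 ≤ ((⌊x k p⌋ : ℝ)) := by exact_mod_cast hp2
            linarith
          have hers : ∑ q ∈ Hset.erase p, W p q = 1 - W p p - KH p := by
            have h1 := Finset.add_sum_erase Hset (W p) hpH
            have h2 : ∑ q ∈ Lset, W p q + ∑ q ∈ Hset, W p q = 1 := by
              rw [← hsplit (W p)]
              exact hrow p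
            simp only [hKH]
            linarith
          have hHle : ∑ q ∈ Hset, W p q * ((⌊x k p⌋ : ℝ) - (⌊x k q⌋ : ℝ))
              ≤ (1 - W p p - KH p) * ((⌊x k p⌋ : ℝ) - (m : ℝ) - 1) := by
            have h3 := Finset.add_sum_erase Hset
              (fun q => W p q * ((⌊x k p⌋ : ℝ) - (⌊x k q⌋ : ℝ))) hpH
            have h4 : W p p * ((⌊x k p⌋ : ℝ) - (⌊x k p⌋ : ℝ)) = 0 := by ring
            have h5 : ∑ q ∈ Hset.erase p, W p q * ((⌊x k p⌋ : ℝ) - (⌊x k q⌋ : ℝ))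
                ≤ ∑ q ∈ Hset.erase p, W p q * ((⌊x k p⌋ : ℝ) - (m : ℝ) - 1) := by
              refine Finset.sum_le_sum fun q hq => ?_
              have hqH := (Finset.mem_erase.mp hq).2
              rw [hHs, Finset.mem_filter] at hqH
              have hq1 : m + 1 ≤ ⌊x k q⌋ := by
                have := hFm q
                rcases lt_or_eq_of_le this with h | h
                · omega
                · exact absurd h.symm hqH.2
              have h2 : ((m : ℝ)) + 1 ≤ ((⌊x k q⌋ : ℝ)) := by exact_mod_cast hq1
              apply mul_le_mul_of_nonneg_left _ (hnn p q)
              linarith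
            have h6 : ∑ q ∈ Hset.erase p, W p q * ((⌊x k p⌋ : ℝ) - (m : ℝ) - 1)
                = (1 - W p p - KH p) * ((⌊x k p⌋ : ℝ) - (m : ℝ) - 1) := by
              rw [← Finset.sum_mul, hers]
            rw [h6] at h5
            calc ∑ q ∈ Hset, W p q * ((⌊x k p⌋ : ℝ) - (⌊x k q⌋ : ℝ))
                = W p p * ((⌊x k p⌋ : ℝ) - (⌊x k p⌋ : ℝ))
                  + ∑ q ∈ Hset.erase p, W p q * ((⌊x k p⌋ : ℝ) - (⌊x k q⌋ : ℝ)) := h3.symm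
              _ ≤ (1 - W p p - KH p) * ((⌊x k p⌋ : ℝ) - (m : ℝ) - 1) := by
                  linarith [h5, h4]
          have hv : -(u p) ≤ KH p * ((⌊x k p⌋ : ℝ) - (m : ℝ))
              + (1 - W p p - KH p) * ((⌊x k p⌋ : ℝ) - (m : ℝ) - 1) := by
            rw [hsplitu, hLpart]
            linarith [hHle]
          have hαp : alpha W γ p = 1 - W p p + γ := rfl
          have hprod1 : ((⌊x k p⌋ : ℝ) - (m : ℝ) - 2) * ((1 - W p p) - 1) ≤ 0 :=
            mul_nonpos_of_nonneg_of_nonpos (by linarith) (by linarith [hnn p p])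
          have hcomb : -(u p) ≤ KH p + (1 - W p p) + ((⌊x k p⌋ : ℝ) - (m : ℝ)) - 2 := by
            nlinarith [hv, hprod1]
          have ht1 : ((⌊x k p⌋ : ℝ) - (m : ℝ)) - 1 ≤ x k p - (m : ℝ) - 1 := by
            linarith [hflle p]
          have h1 : -(alpha W γ p) ≤ (x k p - (m : ℝ) - 1) + u p := by
            have hα := hαge p
            have hα2 := hαle p
            rw [hαp] at hα2 hα ⊢
            linarith [hcomb, ht1, hKHα, hγpos]
          have hup : alpha W γ p - (x k p - (m : ℝ) - 1) - u p ≤ KH p := by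
            have hα2 := hαle p
            rw [hαp] at hα2 ⊢
            linarith [hcomb, ht1, hγpos]
          have h2 : max (alpha W γ p - (x k p - (m : ℝ) - 1) - u p) 0
              ≤ max (alpha W γ p - (x k p - (m : ℝ) - 1)) 0 + KH p := by
            have hmax0 : (0:ℝ) ≤ max (alpha W γ p - (x k p - (m : ℝ) - 1)) 0 :=
              le_max_right _ _
            refine max_le ?_ ?_
            · linarith [hup, hmax0]
            · linarith [hmax0, hKH0]
          have hH := Hcase_aux (x k p - (m : ℝ) - 1) (u p) (alpha W γ p) (KH p) ht0 h1 h2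
          have e1 : x k p - (m : ℝ) - 1 + u p = x k p + u p - (m : ℝ) - 1 := by ring
          rw [e1] at hH
          rw [hBp]
          exact hH
  -- summing the bounds
  have hBsum : ∑ p, B p = -μ := by
    simp only [hB]
    rw [Finset.sum_sub_distrib]
    have h2 : ∑ p, (if p = j then μ else 0) = μ := by
      rw [Finset.sum_ite_eq' Finset.univ j (fun _ => μ), if_pos (Finset.mem_univ j)]
    have h1 : ∑ p, (if ⌊x k p⌋ = m then -(KL p) else KH p) = 0 := by
      rw [hsplit (fun p => if ⌊x k p⌋ = m then -(KL p) else KH p)]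
      have hLev : ∑ p ∈ Lset, (if ⌊x k p⌋ = m then -(KL p) else KH p)
          = ∑ p ∈ Lset, -(KL p) := by
        refine Finset.sum_congr rfl fun p hp => ?_
        rw [hLs, Finset.mem_filter] at hp
        rw [if_pos hp.2]
      have hHev : ∑ p ∈ Hset, (if ⌊x k p⌋ = m then -(KL p) else KH p)
          = ∑ p ∈ Hset, KH p := by
        refine Finset.sum_congr rfl fun p hp => ?_
        rw [hHs, Finset.mem_filter] at hp
        rw [if_neg hp.2]
      have hswap : ∑ p ∈ Lset, KL p = ∑ p ∈ Hset, KH p := by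
        simp only [hKL, hKH]
        refine Finset.sum_comm.trans ?_
        exact Finset.sum_congr rfl fun q _ => Finset.sum_congr rfl fun p _ => hsym p q
      rw [hLev, hHev, Finset.sum_neg_distrib, hswap]
      ring
    rw [h1, h2]
    ring
  have hkey_sum : ∑ p, (max (|x k p + u p - (m : ℝ) - 1| - alpha W γ p) 0
      - max (|x k p - (m : ℝ) - 1| - alpha W γ p) 0 - u p) ≤ -μ := by
    calc ∑ p, (max (|x k p + u p - (m : ℝ) - 1| - alpha W γ p) 0
        - max (|x k p - (m : ℝ) - 1| - alpha W γ p) 0 - u p)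
        ≤ ∑ p, B p := Finset.sum_le_sum fun p _ => key p
      _ = -μ := hBsum
  have hVk1 : Vfun (Nat.zero_lt_one.trans hn) W γ x (k + 1)
      = ∑ p, max (|x k p + u p - (m : ℝ) - 1| - alpha W γ p) 0 := by
    simp only [Vfun, hm]
    exact Finset.sum_congr rfl fun p _ => by rw [hx1 p]
  have hVk : Vfun (Nat.zero_lt_one.trans hn) W γ x k
      = ∑ p, max (|x k p - (m : ℝ) - 1| - alpha W γ p) 0 := by
    simp only [Vfun, ← hm_def]
  have hdiff : Vfun (Nat.zero_lt_one.trans hn) W γ x (k + 1)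
      - Vfun (Nat.zero_lt_one.trans hn) W γ x k ≤ -μ := by
    rw [hVk1, hVk]
    have e : ∑ p, max (|x k p + u p - (m : ℝ) - 1| - alpha W γ p) 0
        - ∑ p, max (|x k p - (m : ℝ) - 1| - alpha W γ p) 0
        = ∑ p, (max (|x k p + u p - (m : ℝ) - 1| - alpha W γ p) 0
            - max (|x k p - (m : ℝ) - 1| - alpha W γ p) 0 - u p) + ∑ p, u p := by
      rw [← Finset.sum_add_distrib, ← Finset.sum_sub_distrib]
      exact Finset.sum_congr rfl fun p _ => by ring
    rw [e, husum, add_zero]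
    exact hkey_sum
  have hδ : deltaMin G W ≤ W i j := by
    simp only [deltaMin]
    apply csInf_le
    · exact ⟨0, by rintro r ⟨p, q, hpq, rfl⟩; exact hnn p q⟩
    · exact ⟨i, j, hadj, rfl⟩
  have hmin : min γ (deltaMin G W) ≤ μ := by
    rw [hμ]
    exact min_le_min (le_refl γ) hδ
  linarith [hdiff, hmin]
end

section
/- Lemma 4 (parent counting lemma): under Assumption 1 and the γ/α setup, suppose on the time interval [k0, k] that m(t) = m(k0) for all t ∈ [k0, k] and V(t) − V(t+1) < β for all t ∈ [k0, k) (i.e. neither situation S1 nor S2 occurs before time k), and suppose X4(k0) ∪ X5(k0) ∪ X6(k0) ≠ ∅. Let i and j be adjacent nodes such that x_j(t) ≤ m(t) + 1 + α_j for all t ∈ [k0, k] (j stays in X1 ∪ X2 ∪ X3). Define T_s(k0, k) = #{t ∈ [k0, k] : x_s(t) < m(t) + 1} for any node s. Then for every positive integer N: if T_i(k0, k) ≥ N·(α_j/w_ij + 1), then T_j(k0, k) ≥ N. -/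
open Finset Filter

-- ===== auxiliary lemmas =====


lemma pc_max_sub_max (a b : ℝ) : max a 0 - max b 0 ≤ max (a - b) 0 := by
  have h1 : a ≤ max b 0 + max (a - b) 0 := by
    calc a = b + (a - b) := by ring
    _ ≤ max b 0 + max (a - b) 0 := add_le_add (le_max_left _ _) (le_max_left _ _)
  have h2 : (0:ℝ) ≤ max b 0 + max (a - b) 0 :=
    add_nonneg (le_max_right _ _) (le_max_right _ _)
  have := max_le h1 h2
  linarith

lemma pc_f_decomp (α v : ℝ) (hα : 0 < α) :
    max (|v| - α) 0 = (v - α) + max (α - v) 0 + max (-α - v) 0 := by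
  rcases le_total v (-α) with h | h
  · rw [abs_of_nonpos (by linarith), max_eq_left (by linarith),
      max_eq_left (by linarith), max_eq_left (by linarith)]
    ring
  · rcases le_total v α with h2 | h2
    · rw [max_eq_right (by rw [sub_nonpos]; exact abs_le.mpr ⟨by linarith, h2⟩),
        max_eq_left (by linarith), max_eq_right (by linarith)]
      ring
    · rw [abs_of_nonneg (by linarith), max_eq_left (by linarith),
        max_eq_right (by linarith), max_eq_right (by linarith)]
      ring

lemma pc_sum_off {n : ℕ} (W : Matrix (Fin n) (Fin n) ℝ) (s : Fin n)
    (hrow : ∑ l, W s l = 1) :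
    ∑ l, (if l = s then 0 else W s l) = 1 - W s s := by
  have h3 : ∀ l : Fin n, (if l = s then (0:ℝ) else W s l)
      = W s l - (if l = s then W s l else 0) := fun l => by split_ifs <;> ring
  rw [Finset.sum_congr rfl fun l _ => h3 l, Finset.sum_sub_distrib, hrow,
    Fintype.sum_ite_eq' s (fun l => W s l)]

lemma pc_row_erase {n : ℕ} {G : SimpleGraph (Fin n)} {W : Matrix (Fin n) (Fin n) ℝ}
    (hW : Assumption1 G W) (s : Fin n) :
    ∑ l ∈ Finset.univ.erase s, W s l = 1 - W s s := by
  have h := Finset.add_sum_erase Finset.univ (fun l => W s l) (Finset.mem_univ s)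
  rw [hW.2.2.1 s] at h
  linarith

lemma pc_wle1 {n : ℕ} {G : SimpleGraph (Fin n)} {W : Matrix (Fin n) (Fin n) ℝ}
    (hW : Assumption1 G W) (s : Fin n) : W s s ≤ 1 := by
  have h2 : (0:ℝ) ≤ ∑ l ∈ Finset.univ.erase s, W s l :=
    Finset.sum_nonneg fun l _ => hW.2.1 s l
  have := pc_row_erase hW s
  linarith

lemma pc_alpha_pos {n : ℕ} {G : SimpleGraph (Fin n)} {W : Matrix (Fin n) (Fin n) ℝ}
    (hW : Assumption1 G W) {γ : ℝ} (hγ0 : 0 < γ) (s : Fin n) : 0 < alpha W γ s := by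
  have := pc_wle1 hW s
  unfold alpha
  linarith

lemma pc_delta {n : ℕ} {W : Matrix (Fin n) (Fin n) ℝ} (hrow : ∀ s, ∑ l, W s l = 1)
    {x : ℕ → Fin n → ℝ} (hx : Traj W x) (t : ℕ) (s : Fin n) :
    x (t + 1) s = x t s + ∑ l, W s l * ((⌊x t l⌋ : ℝ) - (⌊x t s⌋ : ℝ)) := by
  rw [hx t s]
  have h : ∑ l, W s l * ((⌊x t l⌋ : ℝ) - (⌊x t s⌋ : ℝ))
      = (∑ l, W s l * (⌊x t l⌋ : ℝ)) - (∑ l, W s l) * (⌊x t s⌋ : ℝ) := by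
    rw [Finset.sum_mul, ← Finset.sum_sub_distrib]
    exact Finset.sum_congr rfl fun l _ => by ring
  rw [h, hrow s]
  ring


lemma pc_pernode {n : ℕ} {G : SimpleGraph (Fin n)} {W : Matrix (Fin n) (Fin n) ℝ}
    (hW : Assumption1 G W) {x : ℕ → Fin n → ℝ} (hx : Traj W x) {γ : ℝ}
    (hγ : GammaSetup W x γ) (t : ℕ) (m : ℤ) (hflr : ∀ l, m ≤ ⌊x t l⌋) (s : Fin n) :
    ((∑ l, if ⌊x t s⌋ = m ∧ m + 1 ≤ ⌊x t l⌋ then W s l else 0) -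
      ∑ l, if ⌊x t l⌋ = m ∧ m + 1 ≤ ⌊x t s⌋ then W l s else 0) ≤
      (max (alpha W γ s - (x t s - (m : ℝ) - 1)) 0 -
        max (alpha W γ s - (x (t + 1) s - (m : ℝ) - 1)) 0) +
      (max (-alpha W γ s - (x t s - (m : ℝ) - 1)) 0 -
        max (-alpha W γ s - (x (t + 1) s - (m : ℝ) - 1)) 0) := by
  classical
  have hsym := hW.1
  have hnn := hW.2.1
  have hrow := hW.2.2.1
  obtain ⟨hγ0, hγc⟩ := hγ
  obtain ⟨-, -, hg3, hg4⟩ := hγc s t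
  have hfl : ((⌊x t s⌋ : ℝ)) ≤ x t s := Int.floor_le _
  have hfu : x t s < (⌊x t s⌋ : ℝ) + 1 := Int.lt_floor_add_one _
  have hw1 : W s s ≤ 1 := pc_wle1 hW s
  have hαv : alpha W γ s = 1 - W s s + γ := rfl
  have hαpos : 0 < alpha W γ s := pc_alpha_pos hW hγ0 s
  have hα12 : alpha W γ s ≤ 1/2 - γ := by rw [hαv]; linarith
  have hxs := pc_delta hrow hx t s
  set Δ : ℝ := ∑ l, W s l * ((⌊x t l⌋ : ℝ) - (⌊x t s⌋ : ℝ)) with hΔdef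
  have hu'val : x (t+1) s - (m:ℝ) - 1 = (x t s - (m:ℝ) - 1) + Δ := by rw [hxs]; ring
  rcases eq_or_lt_of_le (hflr s) with hFs | hFs1
  · -- case ⌊x t s⌋ = m
    have hFs' : ⌊x t s⌋ = m := hFs.symm
    have hsum1 : (∑ l, if ⌊x t s⌋ = m ∧ m + 1 ≤ ⌊x t l⌋ then W s l else 0)
        = ∑ l, (if m + 1 ≤ ⌊x t l⌋ then W s l else 0) :=
      Finset.sum_congr rfl fun l _ => by simp [hFs']
    have hsum2 : (∑ l, if ⌊x t l⌋ = m ∧ m + 1 ≤ ⌊x t s⌋ then W l s else 0) = 0 :=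
      Finset.sum_eq_zero fun l _ => by
        rw [if_neg]
        rintro ⟨-, h2⟩
        rw [hFs'] at h2
        omega
    set B := ∑ l, (if m + 1 ≤ ⌊x t l⌋ then W s l else 0) with hBdef
    have hB0 : 0 ≤ B := Finset.sum_nonneg fun l _ => by
      split_ifs
      · exact hnn s l
      · exact le_rfl
    have hBle : B ≤ 1 - W s s := by
      have h1 : B ≤ ∑ l, (if l = s then 0 else W s l) := by
        apply Finset.sum_le_sum
        intro l _
        by_cases hls : l = s
        · subst hls
          rw [if_pos rfl, if_neg (by rw [hFs']; omega)]
        · rw [if_neg hls]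
          split_ifs
          · exact le_rfl
          · exact hnn s l
      rw [pc_sum_off W s (hrow s)] at h1
      exact h1
    have hΔB : B ≤ Δ := by
      apply Finset.sum_le_sum
      intro l _
      by_cases hl : m + 1 ≤ ⌊x t l⌋
      · rw [if_pos hl, hFs']
        have h1 : (1:ℝ) ≤ (⌊x t l⌋ : ℝ) - (m:ℝ) := by
          have : (1:ℤ) ≤ ⌊x t l⌋ - m := by omega
          exact_mod_cast this
        nlinarith [hnn s l]
      · rw [if_neg hl, hFs']
        have h1 : (0:ℝ) ≤ (⌊x t l⌋ : ℝ) - (m:ℝ) := by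
          have : (0:ℤ) ≤ ⌊x t l⌋ - m := by have := hflr l; omega
          exact_mod_cast this
        exact mul_nonneg (hnn s l) h1
    have hceq : x t s - (m:ℝ) - 1 = (x t s - (⌊x t s⌋:ℝ)) - 1 := by rw [hFs']
    rw [hsum1, hsum2, hu'val]
    have hbr2 : max (-alpha W γ s - ((x t s - (m:ℝ) - 1) + Δ)) 0
        ≤ max (-alpha W γ s - (x t s - (m:ℝ) - 1)) 0 :=
      max_le_max (by linarith) le_rfl
    have h1 : 0 ≤ alpha W γ s - (x t s - (m:ℝ) - 1) := by
      rw [hceq]; linarith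
    rw [max_eq_left h1]
    rcases le_total (alpha W γ s - ((x t s - (m:ℝ) - 1) + Δ)) 0 with h2 | h2
    · rw [max_eq_right h2]
      have : alpha W γ s - (x t s - (m:ℝ) - 1) ≥ B + 3*γ := by
        rw [hceq, hαv]; linarith
      linarith
    · rw [max_eq_left h2]
      linarith
  · -- case m < ⌊x t s⌋
    have hFs' : ⌊x t s⌋ ≠ m := by omega
    have hsum1 : (∑ l, if ⌊x t s⌋ = m ∧ m + 1 ≤ ⌊x t l⌋ then W s l else 0) = 0 :=
      Finset.sum_eq_zero fun l _ => if_neg (fun h => hFs' h.1)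
    have hsum2 : (∑ l, if ⌊x t l⌋ = m ∧ m + 1 ≤ ⌊x t s⌋ then W l s else 0)
        = ∑ l, (if ⌊x t l⌋ = m then W s l else 0) := by
      apply Finset.sum_congr rfl
      intro l _
      by_cases hl : ⌊x t l⌋ = m
      · rw [if_pos ⟨hl, by omega⟩, if_pos hl, hsym l s]
      · rw [if_neg (fun h => hl h.1), if_neg hl]
    set W0 := ∑ l, (if ⌊x t l⌋ = m then W s l else 0) with hW0def
    have hW00 : 0 ≤ W0 := Finset.sum_nonneg fun l _ => by
      split_ifs
      · exact hnn s l
      · exact le_rfl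
    have hW0le : W0 ≤ 1 - W s s := by
      have h1 : W0 ≤ ∑ l, (if l = s then 0 else W s l) := by
        apply Finset.sum_le_sum
        intro l _
        by_cases hls : l = s
        · subst hls
          rw [if_pos rfl, if_neg hFs']
        · rw [if_neg hls]
          split_ifs
          · exact le_rfl
          · exact hnn s l
      rw [pc_sum_off W s (hrow s)] at h1
      exact h1
    set zR : ℝ := (⌊x t s⌋ : ℝ) - (m : ℝ) with hzRdef
    have hzR1 : 1 ≤ zR := by
      have : (1:ℤ) ≤ ⌊x t s⌋ - m := by omega
      rw [hzRdef]
      exact_mod_cast this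
    have hΔlow : -(zR - 1) * (1 - W s s) - W0 ≤ Δ := by
      have h1 : ∀ l ∈ Finset.univ,
          -(zR-1) * (if l = s then 0 else W s l) - (if ⌊x t l⌋ = m then W s l else 0)
          ≤ W s l * ((⌊x t l⌋:ℝ) - (⌊x t s⌋:ℝ)) := by
        intro l _
        by_cases hls : l = s
        · subst hls
          rw [if_pos rfl, if_neg hFs']
          simp
        · rw [if_neg hls]
          by_cases hlm : ⌊x t l⌋ = m
          · rw [if_pos hlm, hlm]
            have he : ((m:ℝ)) - (⌊x t s⌋:ℝ) = -zR := by rw [hzRdef]; ring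
            rw [he]
            exact le_of_eq (by ring)
          · rw [if_neg hlm]
            have h2 : (m:ℝ) + 1 ≤ (⌊x t l⌋:ℝ) := by
              have : m + 1 ≤ ⌊x t l⌋ := by have := hflr l; omega
              exact_mod_cast this
            have h3 := mul_le_mul_of_nonneg_left
              (by linarith : ((m:ℝ)+1) - (⌊x t s⌋:ℝ) ≤ (⌊x t l⌋:ℝ) - (⌊x t s⌋:ℝ)) (hnn s l)
            have he : -(zR - 1) * W s l = W s l * (((m:ℝ)+1) - (⌊x t s⌋:ℝ)) := by
              rw [hzRdef]; ring
            linarith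
      have h2 := Finset.sum_le_sum h1
      have h3 : ∑ l, (-(zR-1) * (if l = s then 0 else W s l)
            - (if ⌊x t l⌋ = m then W s l else 0))
          = -(zR-1) * (1 - W s s) - W0 := by
        rw [Finset.sum_sub_distrib, ← Finset.mul_sum, pc_sum_off W s (hrow s)]
      rw [h3] at h2
      exact h2
    have hueq : x t s - (m:ℝ) - 1 = zR - 1 + (x t s - (⌊x t s⌋:ℝ)) := by
      rw [hzRdef]; ring
    have hc0 : 0 ≤ x t s - (⌊x t s⌋:ℝ) := by linarith
    have hu0 : 0 ≤ x t s - (m:ℝ) - 1 := by rw [hueq]; linarith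
    have hw0 : 0 ≤ W s s := hnn s s
    have hprod : (zR-1)*(1-W s s) + (zR-1)*W s s = zR - 1 := by ring
    have hu'ge : (zR - 1) * W s s + (x t s - (⌊x t s⌋:ℝ)) - W0 ≤ x (t+1) s - (m:ℝ) - 1 := by
      rw [hu'val, hueq]
      linarith
    have hprodnn : 0 ≤ (zR-1)*W s s := mul_nonneg (by linarith) hw0
    have hLz : max (-alpha W γ s - (x t s - (m:ℝ) - 1)) 0 = 0 :=
      max_eq_right (by linarith)
    have hL'z : max (-alpha W γ s - (x (t+1) s - (m:ℝ) - 1)) 0 = 0 :=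
      max_eq_right (by linarith)
    rw [hsum1, hsum2, hLz, hL'z]
    have hm1s : m + 1 ≤ ⌊x t s⌋ := by omega
    rcases eq_or_lt_of_le hm1s with hz1 | hz2
    · -- ⌊x t s⌋ = m + 1
      have hzeq : zR = 1 := by
        rw [hzRdef, ← hz1]
        push_cast
        ring
      have hΔW0 : -W0 ≤ Δ := by
        rw [hzeq] at hΔlow
        simpa using hΔlow
      have key := pc_max_sub_max (alpha W γ s - (x (t+1) s - (m:ℝ)-1))
        (alpha W γ s - (x t s - (m:ℝ)-1))
      have h3 : (alpha W γ s - (x (t+1) s - (m:ℝ)-1)) - (alpha W γ s - (x t s - (m:ℝ)-1))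
          = -Δ := by rw [hu'val]; ring
      rw [h3] at key
      have h4 : max (-Δ) 0 ≤ W0 := max_le (by linarith) hW00
      linarith
    · -- m + 2 ≤ ⌊x t s⌋
      have hzR2 : 2 ≤ zR := by
        have : (2:ℤ) ≤ ⌊x t s⌋ - m := by omega
        rw [hzRdef]
        exact_mod_cast this
      have h5 : max (alpha W γ s - (x t s - (m:ℝ)-1)) 0 = 0 :=
        max_eq_right (by rw [hueq]; linarith)
      have h6 : max (alpha W γ s - (x (t+1) s - (m:ℝ)-1)) 0 ≤ W0 := by
        apply max_le _ hW00
        have hp : W s s ≤ (zR - 1) * W s s := by nlinarith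
        rw [hαv] at *
        linarith
      rw [h5]
      linarith


lemma pc_core {n : ℕ} (hn : 0 < n) {G : SimpleGraph (Fin n)} {W : Matrix (Fin n) (Fin n) ℝ}
    (hW : Assumption1 G W) {x : ℕ → Fin n → ℝ} (hx : Traj W x) {γ : ℝ}
    (hγ : GammaSetup W x γ) (t : ℕ) (m : ℤ)
    (hmt : mfun hn x t = m) (hmt1 : mfun hn x (t + 1) = m) (q : Fin n) :
    ((max (alpha W γ q - (x t q - (m : ℝ) - 1)) 0 -
        max (alpha W γ q - (x (t + 1) q - (m : ℝ) - 1)) 0) +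
      (max (-alpha W γ q - (x t q - (m : ℝ) - 1)) 0 -
        max (-alpha W γ q - (x (t + 1) q - (m : ℝ) - 1)) 0)) -
      ((∑ l, if ⌊x t q⌋ = m ∧ m + 1 ≤ ⌊x t l⌋ then W q l else 0) -
        ∑ l, if ⌊x t l⌋ = m ∧ m + 1 ≤ ⌊x t q⌋ then W l q else 0) ≤
      Vfun hn W γ x t - Vfun hn W γ x (t + 1) := by
  classical
  have hflr : ∀ l, m ≤ ⌊x t l⌋ := fun l => by
    have h0 : mfun hn x t ≤ ⌊x t l⌋ := Finset.inf'_le _ (Finset.mem_univ l)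
    rw [hmt] at h0
    exact h0
  set e : Fin n → ℝ := fun s =>
    (max (alpha W γ s - (x t s - (m : ℝ) - 1)) 0 -
      max (alpha W γ s - (x (t+1) s - (m : ℝ) - 1)) 0) +
    (max (-alpha W γ s - (x t s - (m : ℝ) - 1)) 0 -
      max (-alpha W γ s - (x (t+1) s - (m : ℝ) - 1)) 0) with hedef
  set r : Fin n → ℝ := fun s =>
    (∑ l, if ⌊x t s⌋ = m ∧ m + 1 ≤ ⌊x t l⌋ then W s l else 0) -
    (∑ l, if ⌊x t l⌋ = m ∧ m + 1 ≤ ⌊x t s⌋ then W l s else 0) with hrdef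
  show e q - r q ≤ _
  have hper : ∀ s, r s ≤ e s := fun s => pc_pernode hW hx hγ t m hflr s
  have hVdiff : Vfun hn W γ x t - Vfun hn W γ x (t+1)
      = (∑ s, (x t s - x (t+1) s)) + ∑ s, e s := by
    unfold Vfun
    rw [hmt, hmt1, ← Finset.sum_sub_distrib, ← Finset.sum_add_distrib]
    refine Finset.sum_congr rfl fun s _ => ?_
    have hαpos : 0 < alpha W γ s := pc_alpha_pos hW hγ.1 s
    rw [pc_f_decomp (alpha W γ s) (x t s - (m:ℝ) - 1) hαpos,
        pc_f_decomp (alpha W γ s) (x (t+1) s - (m:ℝ) - 1) hαpos]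
    show _ = _ + ((max (alpha W γ s - (x t s - (m : ℝ) - 1)) 0 -
      max (alpha W γ s - (x (t+1) s - (m : ℝ) - 1)) 0) +
      (max (-alpha W γ s - (x t s - (m : ℝ) - 1)) 0 -
        max (-alpha W γ s - (x (t+1) s - (m : ℝ) - 1)) 0))
    ring
  have hzero : (∑ s, (x t s - x (t+1) s)) = 0 := by
    have h1 : ∀ s, x t s - x (t+1) s
        = -∑ l, W s l * ((⌊x t l⌋:ℝ) - (⌊x t s⌋:ℝ)) := fun s => by
      rw [pc_delta hW.2.2.1 hx t s]; ring
    rw [Finset.sum_congr rfl fun s _ => h1 s, Finset.sum_neg_distrib]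
    have h2 : (∑ s, ∑ l, W s l * ((⌊x t l⌋:ℝ) - (⌊x t s⌋:ℝ)))
        = ∑ s, ∑ l, W l s * ((⌊x t s⌋:ℝ) - (⌊x t l⌋:ℝ)) := Finset.sum_comm
    have h4 : (∑ s, ∑ l, (W s l * ((⌊x t l⌋:ℝ) - (⌊x t s⌋:ℝ))
        + W l s * ((⌊x t s⌋:ℝ) - (⌊x t l⌋:ℝ)))) = 0 :=
      Finset.sum_eq_zero fun s _ => Finset.sum_eq_zero fun l _ => by
        rw [hW.1 l s]; ring
    simp only [Finset.sum_add_distrib] at h4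
    have : (∑ s, ∑ l, W s l * ((⌊x t l⌋:ℝ) - (⌊x t s⌋:ℝ))) = 0 := by linarith
    rw [this]
    simp
  have hrzero : ∑ s, r s = 0 := by
    rw [hrdef]
    rw [Finset.sum_sub_distrib]
    have h5 : (∑ s, ∑ l, if ⌊x t l⌋ = m ∧ m + 1 ≤ ⌊x t s⌋ then W l s else 0)
        = ∑ s, ∑ l, if ⌊x t s⌋ = m ∧ m + 1 ≤ ⌊x t l⌋ then W s l else 0 := Finset.sum_comm
    rw [h5, sub_self]
  have hsplit : ∑ s, e s = e q + ∑ s ∈ Finset.univ.erase q, e s :=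
    (Finset.add_sum_erase _ _ (Finset.mem_univ q)).symm
  have hsplit2 : ∑ s, r s = r q + ∑ s ∈ Finset.univ.erase q, r s :=
    (Finset.add_sum_erase _ _ (Finset.mem_univ q)).symm
  have hge : ∑ s ∈ Finset.univ.erase q, r s ≤ ∑ s ∈ Finset.univ.erase q, e s :=
    Finset.sum_le_sum fun s _ => hper s
  rw [hVdiff, hzero]
  linarith


lemma pc_app1 {n : ℕ} (hn : 0 < n) {G : SimpleGraph (Fin n)} {W : Matrix (Fin n) (Fin n) ℝ}
    (hW : Assumption1 G W) {x : ℕ → Fin n → ℝ} (hx : Traj W x) {γ : ℝ}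
    (hγ : GammaSetup W x γ) (t : ℕ) (m : ℤ)
    (hmt : mfun hn x t = m) (hmt1 : mfun hn x (t + 1) = m)
    (hVt : Vfun hn W γ x t - Vfun hn W γ x (t + 1) < min γ (deltaMin G W))
    (j : Fin n) (hfj : ⌊x t j⌋ = m + 1) (hcj : x t j - (m : ℝ) - 1 ≤ 1 - W j j) :
    ∀ l, m + 2 ≤ ⌊x t l⌋ → W j l = 0 := by
  classical
  intro l hl
  by_contra hne0
  have hsym := hW.1
  have hnn := hW.2.1
  have hflr : ∀ a, m ≤ ⌊x t a⌋ := fun a => by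
    have h0 : mfun hn x t ≤ ⌊x t a⌋ := Finset.inf'_le _ (Finset.mem_univ a)
    rw [hmt] at h0
    exact h0
  have hwl : 0 < W j l := (hnn j l).lt_of_ne (Ne.symm hne0)
  have hjl : j ≠ l := fun h => by rw [← h] at hl; omega
  have hadj : G.Adj j l := by
    by_contra hna
    exact hne0 (hW.2.2.2.2.1 j l hjl hna)
  have hδle : deltaMin G W ≤ W j l := by
    apply csInf_le
    · exact ⟨0, by rintro r ⟨p, q, hpq, rfl⟩; exact hnn p q⟩
    · exact ⟨j, l, hadj, rfl⟩
  have hcore := pc_core hn hW hx hγ t m hmt hmt1 j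
  have hfj' : ¬(⌊x t j⌋ = m) := by omega
  have hr1 : (∑ l', if ⌊x t j⌋ = m ∧ m + 1 ≤ ⌊x t l'⌋ then W j l' else 0) = 0 :=
    Finset.sum_eq_zero fun l' _ => if_neg (fun h => hfj' h.1)
  set W0 := ∑ l', (if ⌊x t l'⌋ = m then W l' j else 0) with hW0def
  have hr2 : (∑ l', if ⌊x t l'⌋ = m ∧ m + 1 ≤ ⌊x t j⌋ then W l' j else 0) = W0 :=
    Finset.sum_congr rfl fun l' _ => by
      by_cases h : ⌊x t l'⌋ = m
      · rw [if_pos ⟨h, by omega⟩, if_pos h]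
      · rw [if_neg (fun hh => h hh.1), if_neg h]
  have hW00 : 0 ≤ W0 := Finset.sum_nonneg fun l' _ => by
    split_ifs
    · exact hnn l' j
    · exact le_rfl
  have hW0le : W0 ≤ 1 - W j j := by
    have h1 : W0 ≤ ∑ l', (if l' = j then 0 else W j l') := by
      apply Finset.sum_le_sum
      intro l' _
      by_cases hlj : l' = j
      · subst hlj
        rw [if_pos rfl, if_neg hfj']
      · rw [if_neg hlj]
        split_ifs
        · rw [hsym l' j]
        · exact hnn j l'
    rw [pc_sum_off W j (hW.2.2.1 j)] at h1
    exact h1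
  have hxs := pc_delta hW.2.2.1 hx t j
  set Δ : ℝ := ∑ l', W j l' * ((⌊x t l'⌋:ℝ) - (⌊x t j⌋:ℝ)) with hΔdef
  have hfjR : (⌊x t j⌋:ℝ) = (m:ℝ) + 1 := by rw [hfj]; push_cast; ring
  have hΔge : W j l - W0 ≤ Δ := by
    have h1 : ∀ l' ∈ Finset.univ,
        (if l' = l then W j l else 0) - (if ⌊x t l'⌋ = m then W l' j else 0)
        ≤ W j l' * ((⌊x t l'⌋:ℝ) - (⌊x t j⌋:ℝ)) := by
      intro l' _
      rw [hfjR]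
      by_cases h1 : l' = l
      · subst h1
        rw [if_pos rfl, if_neg (by omega : ¬(⌊x t l'⌋ = m))]
        have h2 : (1:ℝ) ≤ (⌊x t l'⌋:ℝ) - ((m:ℝ)+1) := by
          exact_mod_cast (show (1:ℤ) ≤ ⌊x t l'⌋ - (m+1) by omega)
        nlinarith [hwl.le]
      · by_cases h2 : ⌊x t l'⌋ = m
        · rw [if_neg h1, if_pos h2, h2, hsym l' j]
          exact le_of_eq (by push_cast; ring)
        · rw [if_neg h1, if_neg h2]
          have h3 : (0:ℝ) ≤ (⌊x t l'⌋:ℝ) - ((m:ℝ)+1) := by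
            exact_mod_cast (show (0:ℤ) ≤ ⌊x t l'⌋ - (m+1) by have := hflr l'; omega)
          have := mul_nonneg (hnn j l') h3
          linarith
    have h2 := Finset.sum_le_sum h1
    rw [Finset.sum_sub_distrib, Fintype.sum_ite_eq' l (fun _ => W j l)] at h2
    exact h2
  have hfl : ((⌊x t j⌋ : ℝ)) ≤ x t j := Int.floor_le _
  have hu0 : 0 ≤ x t j - (m:ℝ) - 1 := by rw [hfjR] at hfl; linarith
  have hαv : alpha W γ j = 1 - W j j + γ := rfl
  have hγ0 : 0 < γ := hγ.1
  have hαpos : 0 < alpha W γ j := pc_alpha_pos hW hγ0 j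
  have hu'val : x (t+1) j - (m:ℝ) - 1 = (x t j - (m:ℝ) - 1) + Δ := by rw [hxs]; ring
  have hL : max (-alpha W γ j - (x t j - (m:ℝ) - 1)) 0 = 0 := max_eq_right (by linarith)
  have hL' : max (-alpha W γ j - (x (t+1) j - (m:ℝ) - 1)) 0 = 0 :=
    max_eq_right (by rw [hu'val]; linarith)
  have hmin : min γ (deltaMin G W) ≤ W j l := le_trans (min_le_right _ _) hδle
  have hminγ : min γ (deltaMin G W) ≤ γ := min_le_left _ _
  rw [hr1, hr2, hL, hL'] at hcore
  have h3 : max (alpha W γ j - (x t j - (m:ℝ) - 1)) 0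
      = alpha W γ j - (x t j - (m:ℝ) - 1) := max_eq_left (by linarith)
  rw [h3] at hcore
  rcases le_total (alpha W γ j - (x (t+1) j - (m:ℝ) - 1)) 0 with h2 | h2
  · rw [max_eq_right h2] at hcore
    have : min γ (deltaMin G W) ≤ Vfun hn W γ x t - Vfun hn W γ x (t+1) := by
      refine le_trans ?_ hcore
      linarith
    linarith
  · rw [max_eq_left h2] at hcore
    have h5 : alpha W γ j - (x t j - (m:ℝ) - 1) -
        (alpha W γ j - (x (t+1) j - (m:ℝ) - 1)) = Δ := by rw [hu'val]; ring
    have : min γ (deltaMin G W) ≤ Vfun hn W γ x t - Vfun hn W γ x (t+1) := by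
      refine le_trans ?_ hcore
      linarith
    linarith

lemma pc_app2 {n : ℕ} (hn : 0 < n) {G : SimpleGraph (Fin n)} {W : Matrix (Fin n) (Fin n) ℝ}
    (hW : Assumption1 G W) {x : ℕ → Fin n → ℝ} (hx : Traj W x) {γ : ℝ}
    (hγ : GammaSetup W x γ) (t : ℕ) (m : ℤ)
    (hmt : mfun hn x t = m) (hmt1 : mfun hn x (t + 1) = m)
    (hVt : Vfun hn W γ x t - Vfun hn W γ x (t + 1) < min γ (deltaMin G W))
    (j i : Fin n) (hij : i ≠ j) (hfj : ⌊x t j⌋ = m)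
    (hju1 : x (t + 1) j ≤ (m : ℝ) + 1 + alpha W γ j) :
    x (t + 1) j - x t j <
      (1 - W j j) + min γ (deltaMin G W) - (if ⌊x t i⌋ = m then W i j else 0) := by
  classical
  have hsym := hW.1
  have hnn := hW.2.1
  have hflr : ∀ a, m ≤ ⌊x t a⌋ := fun a => by
    have h0 : mfun hn x t ≤ ⌊x t a⌋ := Finset.inf'_le _ (Finset.mem_univ a)
    rw [hmt] at h0
    exact h0
  have hcore := pc_core hn hW hx hγ t m hmt hmt1 j
  set B := ∑ l, (if m + 1 ≤ ⌊x t l⌋ then W j l else 0) with hBdef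
  have hr1 : (∑ l, if ⌊x t j⌋ = m ∧ m + 1 ≤ ⌊x t l⌋ then W j l else 0) = B :=
    Finset.sum_congr rfl fun l _ => by simp [hfj]
  have hr2 : (∑ l, if ⌊x t l⌋ = m ∧ m + 1 ≤ ⌊x t j⌋ then W l j else 0) = 0 :=
    Finset.sum_eq_zero fun l _ => by
      rw [if_neg]
      rintro ⟨-, h⟩
      rw [hfj] at h
      omega
  have hxs := pc_delta hW.2.2.1 hx t j
  set Δ : ℝ := ∑ l, W j l * ((⌊x t l⌋:ℝ) - (⌊x t j⌋:ℝ)) with hΔdef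
  have hΔ0 : 0 ≤ Δ := Finset.sum_nonneg fun l _ => by
    apply mul_nonneg (hnn j l)
    have h9 : (0:ℝ) ≤ (⌊x t l⌋:ℝ) - (⌊x t j⌋:ℝ) := by
      exact_mod_cast (show (0:ℤ) ≤ ⌊x t l⌋ - ⌊x t j⌋ by have := hflr l; omega)
    linarith
  have hu'val : x (t+1) j - (m:ℝ) - 1 = (x t j - (m:ℝ) - 1) + Δ := by rw [hxs]; ring
  have hfl : ((⌊x t j⌋ : ℝ)) ≤ x t j := Int.floor_le _
  have hfu : x t j < (⌊x t j⌋ : ℝ) + 1 := Int.lt_floor_add_one _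
  have hfjR : (⌊x t j⌋:ℝ) = (m:ℝ) := by rw [hfj]
  have hαpos : 0 < alpha W γ j := pc_alpha_pos hW hγ.1 j
  have hu0 : x t j - (m:ℝ) - 1 < 0 := by rw [← hfjR]; linarith
  have hm1 : max (alpha W γ j - (x t j - (m:ℝ) - 1)) 0
      = alpha W γ j - (x t j - (m:ℝ) - 1) := max_eq_left (by linarith)
  have hm2 : max (alpha W γ j - (x (t+1) j - (m:ℝ) - 1)) 0
      = alpha W γ j - (x (t+1) j - (m:ℝ) - 1) := max_eq_left (by linarith)
  have hbr2 : max (-alpha W γ j - (x (t+1) j - (m:ℝ) - 1)) 0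
      ≤ max (-alpha W γ j - (x t j - (m:ℝ) - 1)) 0 :=
    max_le_max (by rw [hu'val]; linarith) le_rfl
  rw [hr1, hr2, hm1, hm2] at hcore
  -- hcore : (Δ' ...) + bracket2 - (B - 0) ≤ V - V'
  have hDB : Δ - B ≤ Vfun hn W γ x t - Vfun hn W γ x (t+1) := by
    refine le_trans ?_ hcore
    have : alpha W γ j - (x t j - (m:ℝ) - 1) -
        (alpha W γ j - (x (t+1) j - (m:ℝ) - 1)) = Δ := by rw [hu'val]; ring
    linarith
  have hBle : B ≤ (1 - W j j) - (if ⌊x t i⌋ = m then W i j else 0) := by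
    by_cases hFi : ⌊x t i⌋ = m
    · rw [if_pos hFi]
      have h1 : B ≤ ∑ l, (if l = j ∨ l = i then 0 else W j l) := by
        apply Finset.sum_le_sum
        intro l _
        by_cases h1 : l = j ∨ l = i
        · rw [if_pos h1]
          rcases h1 with h1 | h1 <;> subst h1
          · rw [if_neg (by rw [hfj]; omega)]
          · rw [if_neg (by rw [hFi]; omega)]
        · rw [if_neg h1]
          split_ifs
          · exact le_rfl
          · exact hnn j l
      have h2 : ∑ l, (if l = j ∨ l = i then (0:ℝ) else W j l) = 1 - W j j - W j i := by
        have h3 : ∀ l : Fin n, (if l = j ∨ l = i then (0:ℝ) else W j l)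
            = W j l - (if l = j then W j l else 0) - (if l = i then W j l else 0) := by
          intro l
          by_cases ha : l = j
          · subst ha
            rw [if_pos (Or.inl rfl), if_pos rfl, if_neg (fun h => hij h.symm)]
            ring
          · by_cases hb : l = i
            · subst hb
              rw [if_pos (Or.inr rfl), if_neg ha, if_pos rfl]
              ring
            · rw [if_neg (by tauto), if_neg ha, if_neg hb]
              ring
        rw [Finset.sum_congr rfl fun l _ => h3 l, Finset.sum_sub_distrib,
          Finset.sum_sub_distrib, hW.2.2.1 j, Fintype.sum_ite_eq' j (fun l => W j l),
          Fintype.sum_ite_eq' i (fun l => W j l)]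
      rw [h2, show W j i = W i j from hsym j i] at h1
      linarith
    · rw [if_neg hFi]
      have h1 : B ≤ ∑ l, (if l = j then 0 else W j l) := by
        apply Finset.sum_le_sum
        intro l _
        by_cases h1 : l = j
        · subst h1
          rw [if_pos rfl, if_neg (by rw [hfj]; omega)]
        · rw [if_neg h1]
          split_ifs
          · exact le_rfl
          · exact hnn j l
      rw [pc_sum_off W j (hW.2.2.1 j)] at h1
      linarith
  have : x (t+1) j - x t j = Δ := by rw [hxs]; ring
  linarith


/-- Lemma 4 (parent counting lemma). -/
theorem parent_counting {n : ℕ} (hn : 1 < n)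
    (G : SimpleGraph (Fin n)) (hG : G.Connected)
    (W : Matrix (Fin n) (Fin n) ℝ) (hW : Assumption1 G W)
    (x : ℕ → Fin n → ℝ) (hx : Traj W x)
    (γ : ℝ) (hγ : GammaSetup W x γ)
    (k0 k : ℕ) (hk : k0 ≤ k)
    (hm : ∀ t, k0 ≤ t → t ≤ k →
      mfun (Nat.zero_lt_one.trans hn) x t = mfun (Nat.zero_lt_one.trans hn) x k0)
    (hV : ∀ t, k0 ≤ t → t < k →
      Vfun (Nat.zero_lt_one.trans hn) W γ x t - Vfun (Nat.zero_lt_one.trans hn) W γ x (t + 1) <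
        min γ (deltaMin G W))
    (hne : ∃ p, (mfun (Nat.zero_lt_one.trans hn) x k0 : ℝ) + 1 + alpha W γ p < x k0 p)
    (i j : Fin n) (hadj : G.Adj i j)
    (hj : ∀ t, k0 ≤ t → t ≤ k →
      x t j ≤ (mfun (Nat.zero_lt_one.trans hn) x t : ℝ) + 1 + alpha W γ j)
    (N : ℕ) (hN : 0 < N)
    (hTi : (N : ℝ) * (alpha W γ j / W i j + 1) ≤
      (Tcount (Nat.zero_lt_one.trans hn) x i k0 k : ℝ)) :
    N ≤ Tcount (Nat.zero_lt_one.trans hn) x j k0 k := by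
    classical
  have hn0 : 0 < n := Nat.zero_lt_one.trans hn
  have hm' : ∀ t, k0 ≤ t → t ≤ k → mfun hn0 x t = mfun hn0 x k0 := fun t a b => hm t a b
  have hV' : ∀ t, k0 ≤ t → t < k →
      Vfun hn0 W γ x t - Vfun hn0 W γ x (t+1) < min γ (deltaMin G W) := fun t a b => hV t a b
  have hj' : ∀ t, k0 ≤ t → t ≤ k →
      x t j ≤ (mfun hn0 x t : ℝ) + 1 + alpha W γ j := fun t a b => hj t a b
  have hTi' : (N:ℝ) * (alpha W γ j / W i j + 1) ≤ (Tcount hn0 x i k0 k : ℝ) := hTi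
  show N ≤ Tcount hn0 x j k0 k
  set β := min γ (deltaMin G W) with hβdef
  set m : ℤ := mfun hn0 x k0 with hmdef
  have hsym := hW.1
  have hnn := hW.2.1
  have hγ0 : 0 < γ := hγ.1
  have hwij : 0 < W i j := (hW.2.2.2.2.2 i j hadj).2.1
  have hβγ : β ≤ γ := min_le_left _ _
  have hβ0 : 0 ≤ β :=
    le_min hγ0.le (Real.sInf_nonneg (by rintro r ⟨p, q, h, rfl⟩; exact hnn p q))
  have hijne : i ≠ j := hadj.ne
  have hwijle : W i j ≤ 1 - W j j := by
    have h1 : W j i ≤ ∑ l ∈ Finset.univ.erase j, W j l :=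
      Finset.single_le_sum (fun l _ => hnn j l)
        (Finset.mem_erase.mpr ⟨hijne, Finset.mem_univ i⟩)
    rw [pc_row_erase hW j] at h1
    rw [show W i j = W j i from hsym i j]
    exact h1
  have hαj : alpha W γ j = 1 - W j j + γ := rfl
  have hmt : ∀ t, k0 ≤ t → t ≤ k → mfun hn0 x t = m := hm'
  have hflr : ∀ t, k0 ≤ t → t ≤ k → ∀ a, m ≤ ⌊x t a⌋ := fun t h1 h2 a => by
    have h0 : mfun hn0 x t ≤ ⌊x t a⌋ := Finset.inf'_le _ (Finset.mem_univ a)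
    rw [hmt t h1 h2] at h0
    exact h0
  have hDiff : ∀ t, k0 ≤ t → t ≤ k → ∀ a : Fin n,
      (x t a < (m:ℝ) + 1 ↔ ⌊x t a⌋ = m) := by
    intro t h1 h2 a
    constructor
    · intro h
      have h3 := hflr t h1 h2 a
      have h4 : (⌊x t a⌋ : ℝ) ≤ x t a := Int.floor_le _
      have h6 : ⌊x t a⌋ < m + 1 := by exact_mod_cast lt_of_le_of_lt h4 h
      omega
    · intro h
      have h4 := Int.lt_floor_add_one (x t a)
      rw [h] at h4
      exact_mod_cast h4
  have hTc : ∀ s : Fin n, Tcount hn0 x s k0 k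
      = ((Finset.Icc k0 k).filter (fun t => x t s < (m:ℝ) + 1)).card := by
    intro s
    unfold Tcount
    congr 1
    apply Finset.filter_congr
    intro t ht
    rw [Finset.mem_Icc] at ht
    rw [hmt t ht.1 ht.2]
  have hα1 : alpha W γ j < 1 := by
    have h2 := (hγ.2 j 0).2.2.2
    rw [hαj]
    linarith
  -- key fact: when x t j is at least m+1, its floor is m+1 and it is ≤ m+1+(1-Wjj)
  have hkey : ∀ t, k0 ≤ t → t ≤ k → ((m:ℝ)+1) ≤ x t j →
      ⌊x t j⌋ = m + 1 ∧ x t j ≤ (m:ℝ) + 1 + (1 - W j j) := by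
    intro t h1 h2 hge
    have hju := hj' t h1 h2
    rw [hmt t h1 h2] at hju
    have hfj : ⌊x t j⌋ = m + 1 := by
      rw [Int.floor_eq_iff]
      constructor
      · push_cast
        linarith
      · push_cast
        linarith [hα1]
    refine ⟨hfj, ?_⟩
    have hg1 := (hγ.2 j t).1
    have hfjR : (⌊x t j⌋:ℝ) = (m:ℝ)+1 := by rw [hfj]; push_cast; ring
    by_contra hcc
    push_neg at hcc
    have h5 : x t j - (⌊x t j⌋:ℝ) > 1 - W j j := by rw [hfjR]; linarith
    have h6 := hg1 h5
    rw [hfjR] at h6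
    rw [hαj] at hju
    linarith
  by_contra hcon
  push_neg at hcon
  -- step bound
  have hstep : ∀ t, k0 ≤ t → t < k →
      max (x (t+1) j) ((m:ℝ)+1) - max (x t j) ((m:ℝ)+1) ≤
      (if x t j < (m:ℝ)+1 then (1 - W j j) + β else 0)
      + (if ¬(x t j < (m:ℝ)+1) ∧ x (t+1) j < (m:ℝ)+1 then W i j else 0)
      - (if x t i < (m:ℝ)+1 then W i j else 0) := by
    intro t h1 h2
    have ht1a : k0 ≤ t + 1 := by omega
    have ht1b : t + 1 ≤ k := h2
    have hmt0 := hmt t h1 (le_of_lt h2)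
    have hmt1 := hmt (t+1) ht1a ht1b
    have hVt := hV' t h1 h2
    have hiC : (if ⌊x t i⌋ = m then W i j else 0)
        = (if x t i < (m:ℝ)+1 then W i j else 0) := by
      exact (if_congr (hDiff t h1 (le_of_lt h2) i) rfl rfl).symm
    by_cases hD : x t j < (m:ℝ)+1
    · rw [if_pos hD, if_neg (by intro hcontra; exact hcontra.1 hD)]
      have hfj : ⌊x t j⌋ = m := (hDiff t h1 (le_of_lt h2) j).mp hD
      have happ2 := pc_app2 hn0 hW hx hγ t m hmt0 hmt1 hVt j i hijne hfj
        (by have h9 := hj' (t+1) ht1a ht1b; rwa [hmt1] at h9)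
      rw [hiC] at happ2
      have hbound0 : 0 ≤ (1 - W j j) + β - (if x t i < (m:ℝ)+1 then W i j else 0) := by
        split_ifs
        · linarith
        · linarith
      have hy1 : max (x t j) ((m:ℝ)+1) = (m:ℝ)+1 := max_eq_right hD.le
      have hy2 : max (x (t+1) j) ((m:ℝ)+1)
          ≤ ((m:ℝ)+1) + ((1 - W j j) + β - (if x t i < (m:ℝ)+1 then W i j else 0)) := by
        apply max_le
        · linarith
        · linarith
      rw [hy1]
      linarith
    · rw [if_neg hD]
      by_cases hD1 : x (t+1) j < (m:ℝ)+1
      · rw [if_pos ⟨hD, hD1⟩]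
        have hy2 : max (x (t+1) j) ((m:ℝ)+1) = (m:ℝ)+1 := max_eq_right hD1.le
        have hy1 : (m:ℝ)+1 ≤ max (x t j) ((m:ℝ)+1) := le_max_right _ _
        have hχ : (if x t i < (m:ℝ)+1 then W i j else 0) ≤ W i j := by
          split_ifs
          · exact le_rfl
          · exact hwij.le
        rw [hy2]
        linarith
      · rw [if_neg (fun h => hD1 h.2)]
        push_neg at hD hD1
        obtain ⟨hfj, hcjx⟩ := hkey t h1 (le_of_lt h2) hD
        have hcj : x t j - (m:ℝ) - 1 ≤ 1 - W j j := by linarith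
        have happ1 := pc_app1 hn0 hW hx hγ t m hmt0 hmt1 hVt j hfj hcj
        have hxs := pc_delta hW.2.2.1 hx t j
        have hfjR : (⌊x t j⌋:ℝ) = (m:ℝ)+1 := by rw [hfj]; push_cast; ring
        have hΔle : x (t+1) j - x t j ≤ -(if x t i < (m:ℝ)+1 then W i j else 0) := by
          have hsumle : ∑ l, W j l * ((⌊x t l⌋:ℝ) - (⌊x t j⌋:ℝ))
              ≤ -(if x t i < (m:ℝ)+1 then W i j else 0) := by
            by_cases hCi : x t i < (m:ℝ)+1
            · rw [if_pos hCi]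
              have hfi : ⌊x t i⌋ = m := (hDiff t h1 (le_of_lt h2) i).mp hCi
              have h7 : ∀ l ∈ Finset.univ, W j l * ((⌊x t l⌋:ℝ) - (⌊x t j⌋:ℝ))
                  ≤ (if l = i then -(W i j) else 0) := by
                intro l _
                by_cases hli : l = i
                · rw [if_pos hli, hli, hfjR, hfi]
                  refine le_of_eq ?_
                  rw [show W j i = W i j from hsym j i]
                  push_cast
                  ring
                · rw [if_neg hli]
                  rcases le_or_gt (⌊x t l⌋) (m+1) with h8 | h8
                  · have h9 : (⌊x t l⌋:ℝ) - (⌊x t j⌋:ℝ) ≤ 0 := by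
                      rw [hfjR]
                      have : (⌊x t l⌋:ℝ) ≤ (m:ℝ)+1 := by
                        exact_mod_cast (show (⌊x t l⌋:ℤ) ≤ m+1 from h8)
                      linarith
                    exact mul_nonpos_of_nonneg_of_nonpos (hnn j l) h9
                  · rw [happ1 l (by omega)]
                    simp
              have h11 := Finset.sum_le_sum h7
              rw [Fintype.sum_ite_eq' i (fun _ => -(W i j))] at h11
              exact h11
            · rw [if_neg hCi, neg_zero]
              apply Finset.sum_nonpos
              intro l _
              rcases le_or_gt (⌊x t l⌋) (m+1) with h8 | h8
              · have h9 : (⌊x t l⌋:ℝ) - (⌊x t j⌋:ℝ) ≤ 0 := by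
                  rw [hfjR]
                  have : (⌊x t l⌋:ℝ) ≤ (m:ℝ)+1 := by
                    exact_mod_cast (show (⌊x t l⌋:ℤ) ≤ m+1 from h8)
                  linarith
                exact mul_nonpos_of_nonneg_of_nonpos (hnn j l) h9
              · rw [happ1 l (by omega)]
                simp
          linarith [hxs, hsumle]
        have hy1 : max (x t j) ((m:ℝ)+1) = x t j := max_eq_left hD
        have hy2 : max (x (t+1) j) ((m:ℝ)+1) = x (t+1) j := max_eq_left hD1
        rw [hy1, hy2]
        linarith
  -- telescoping
  have htel : ∀ K, k0 ≤ K →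
      (∑ t ∈ Finset.Ico k0 K, (max (x (t+1) j) ((m:ℝ)+1) - max (x t j) ((m:ℝ)+1)))
      = max (x K j) ((m:ℝ)+1) - max (x k0 j) ((m:ℝ)+1) := by
    intro K hK
    induction K, hK using Nat.le_induction with
    | base => rw [Finset.Ico_self, Finset.sum_empty]; ring
    | succ K hK ih => rw [Finset.sum_Ico_succ_top hK, ih]; ring
  set d := ((Finset.Ico k0 k).filter (fun t => x t j < (m:ℝ)+1)).card with hddef
  set cr := ((Finset.Ico k0 k).filter
    (fun t => ¬(x t j < (m:ℝ)+1) ∧ x (t+1) j < (m:ℝ)+1)).card with hcrdef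
  set cI := ((Finset.Ico k0 k).filter (fun t => x t i < (m:ℝ)+1)).card with hcIdef
  have hQsum : (∑ t ∈ Finset.Ico k0 k, ((if x t j < (m:ℝ)+1 then (1 - W j j) + β else 0)
      + (if ¬(x t j < (m:ℝ)+1) ∧ x (t+1) j < (m:ℝ)+1 then W i j else 0)
      - (if x t i < (m:ℝ)+1 then W i j else 0)))
      = (d:ℝ) * ((1 - W j j) + β) + (cr:ℝ) * W i j - (cI:ℝ) * W i j := by
    rw [Finset.sum_sub_distrib, Finset.sum_add_distrib]
    congr 1
    · congr 1
      · rw [← Finset.sum_filter, Finset.sum_const, nsmul_eq_mul]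
      · rw [← Finset.sum_filter, Finset.sum_const, nsmul_eq_mul]
    · rw [← Finset.sum_filter, Finset.sum_const, nsmul_eq_mul]
  have hsum : max (x k j) ((m:ℝ)+1) - max (x k0 j) ((m:ℝ)+1)
      ≤ (d:ℝ) * ((1 - W j j) + β) + (cr:ℝ) * W i j - (cI:ℝ) * W i j := by
    rw [← hQsum, ← htel k hk]
    apply Finset.sum_le_sum
    intro t ht
    rw [Finset.mem_Ico] at ht
    exact hstep t ht.1 ht.2
  have hyk : ((m:ℝ)+1) ≤ max (x k j) ((m:ℝ)+1) := le_max_right _ _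
  have hyk0 : max (x k0 j) ((m:ℝ)+1) ≤ (m:ℝ) + 1 + (1 - W j j) := by
    rcases le_or_gt (x k0 j) ((m:ℝ)+1) with h | h
    · rw [max_eq_right h]
      linarith
    · rw [max_eq_left h.le]
      exact (hkey k0 le_rfl hk h.le).2
  -- cards
  have hdT : d ≤ Tcount hn0 x j k0 k := by
    rw [hTc j]
    exact Finset.card_le_card (Finset.filter_subset_filter _ Finset.Ico_subset_Icc_self)
  have hcrT : cr ≤ Tcount hn0 x j k0 k := by
    rw [hTc j]
    apply Finset.card_le_card_of_injOn (fun t => t + 1)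
    · intro t ht
      rw [Finset.mem_coe, Finset.mem_filter, Finset.mem_Ico] at ht
      rw [Finset.mem_coe, Finset.mem_filter, Finset.mem_Icc]
      beta_reduce
      exact ⟨⟨by omega, by omega⟩, ht.2.2⟩
    · intro a _ b _ h
      have h2 : a + 1 = b + 1 := h
      omega
  have hcIT : Tcount hn0 x i k0 k ≤ cI + 1 := by
    rw [hTc i]
    have h1 : Finset.Icc k0 k = insert k (Finset.Ico k0 k) := (Finset.Ico_insert_right hk).symm
    rw [h1, Finset.filter_insert]
    split_ifs
    · exact Finset.card_insert_le _ _
    · exact Nat.le_succ_of_le le_rfl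
  -- numeric assembly
  have hTj1 : (Tcount hn0 x j k0 k : ℝ) ≤ (N:ℝ) - 1 := by
    have h2 : Tcount hn0 x j k0 k + 1 ≤ N := hcon
    have h3 : ((Tcount hn0 x j k0 k + 1 : ℕ) : ℝ) ≤ (N:ℝ) := by exact_mod_cast h2
    push_cast at h3
    linarith
  have hdR : (d:ℝ) ≤ (N:ℝ) - 1 :=
    le_trans (by exact_mod_cast hdT) hTj1
  have hcrR : (cr:ℝ) ≤ (N:ℝ) - 1 :=
    le_trans (by exact_mod_cast hcrT) hTj1
  have hcIR : (Tcount hn0 x i k0 k : ℝ) ≤ (cI:ℝ) + 1 := by exact_mod_cast hcIT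
  have hNα : (N:ℝ) * (alpha W γ j) + (N:ℝ) * W i j
      ≤ (Tcount hn0 x i k0 k : ℝ) * W i j := by
    have h1 := mul_le_mul_of_nonneg_right hTi' hwij.le
    have h2 : (N:ℝ) * (alpha W γ j / W i j + 1) * W i j
        = (N:ℝ) * (alpha W γ j / W i j * W i j) + (N:ℝ) * W i j := by ring
    rw [h2, div_mul_cancel₀ _ (ne_of_gt hwij)] at h1
    exact h1
  have hN1 : (1:ℝ) ≤ (N:ℝ) := by exact_mod_cast hN
  have hww : 0 ≤ 1 - W j j := by linarith
  have hp1 : (d:ℝ)*((1-W j j)+β) ≤ ((N:ℝ)-1)*((1-W j j)+β) :=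
    mul_le_mul_of_nonneg_right hdR (by linarith)
  have hp2 : (cr:ℝ)*W i j ≤ ((N:ℝ)-1)*W i j := mul_le_mul_of_nonneg_right hcrR hwij.le
  have hp3 : (Tcount hn0 x i k0 k : ℝ) * W i j ≤ ((cI:ℝ)+1) * W i j :=
    mul_le_mul_of_nonneg_right hcIR hwij.le
  have hp4 : ((N:ℝ)-1)*β ≤ ((N:ℝ)-1)*γ := mul_le_mul_of_nonneg_left hβγ (by linarith)
  have he1 : (N:ℝ) * (alpha W γ j) = (N:ℝ)*(1-W j j) + (N:ℝ)*γ := by rw [hαj]; ring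
  have he2 : ((N:ℝ)-1)*((1-W j j)+β) = (N:ℝ)*(1-W j j) - (1-W j j) + ((N:ℝ)-1)*β := by
    ring
  have he3 : ((N:ℝ)-1)*γ = (N:ℝ)*γ - γ := by ring
  have he4 : ((cI:ℝ)+1)*W i j = (cI:ℝ)*W i j + W i j := by ring
  have he5 : ((N:ℝ)-1)*W i j = (N:ℝ)*W i j - W i j := by ring
  linarith
end
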